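/- arXiv:2005.05553 — 7 statements merged into one kernel-verified Lean document; each statement's English description precedes it below -/
import Mathlib

section
/- Let F be a field, f ∈ F[t] irreducible of degree d, x ∈ Mat_d(F) with characteristic polynomial f, and E = F[x]. Then the kernel of the linear map ad_x : Mat_d(F) → Mat_d(F), y ↦ xy − yx, equals E. -/
open Polynomial Matrix

private lemma sum_mulVec' {n ι : Type*} [Fintype n] [DecidableEq n] {R : Type*} [CommRing R]
    (s : Finset ι) (A : ι → Matrix n n R) (v : n → R) :
    (∑ i ∈ s, A i) *ᵥ v = ∑ i ∈ s, (A i) *ᵥ v := by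
  classical
  induction s using Finset.induction_on with
  | empty => simp
  | insert a s h ih => rw [Finset.sum_insert h, Finset.sum_insert h, Matrix.add_mulVec, ih]

/-- The kernel of `ad_x : Mat_d(F) → Mat_d(F)`, `y ↦ x*y - y*x`, equals `E = F[x]`,
when `x` has irreducible characteristic polynomial `f` of degree `d`. -/
theorem stmt2 (F : Type*) [Field F] (d : ℕ) (f : Polynomial F)
    (hf : Irreducible f) (hdeg : f.natDegree = d)
    (x : Matrix (Fin d) (Fin d) F) (hx : x.charpoly = f) :
    ∀ y : Matrix (Fin d) (Fin d) F,
      x * y - y * x = 0 ↔ y ∈ Algebra.adjoin F ({x} : Set (Matrix (Fin d) (Fin d) F)) := by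
  intro y
  have hd : 0 < d := hdeg ▸ hf.natDegree_pos
  have hne : Nonempty (Fin d) := ⟨⟨0, hd⟩⟩
  constructor
  · intro hcomm
    have hc : x * y = y * x := sub_eq_zero.mp hcomm
    -- cyclic vector
    set v : Fin d → F := Pi.single ⟨0, hd⟩ 1 with hv
    have hv0 : v ≠ 0 := by
      intro h
      have := congrFun h ⟨0, hd⟩
      simp [hv] at this
    -- the annihilator ideal of v
    let I : Ideal (Polynomial F) :=
      { carrier := {p | (Polynomial.aeval x p).mulVec v = 0}
        add_mem' := by
          intro a b ha hb
          simp only [Set.mem_setOf_eq, map_add, Matrix.add_mulVec] at *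
          rw [ha, hb, add_zero]
        zero_mem' := by simp
        smul_mem' := by
          intro c p hp
          simp only [Set.mem_setOf_eq, smul_eq_mul, _root_.map_mul] at *
          rw [← Matrix.mulVec_mulVec, hp, Matrix.mulVec_zero] }
    have hfI : f ∈ I := by
      show (Polynomial.aeval x f).mulVec v = 0
      rw [← hx, Matrix.aeval_self_charpoly, Matrix.zero_mulVec]
    -- every nonzero element of I has degree ≥ d
    have hIdeg : ∀ p ∈ I, p ≠ 0 → d ≤ p.natDegree := by
      intro p hp hp0
      obtain ⟨g, hg⟩ := (inferInstance : (I : Ideal (Polynomial F)).IsPrincipal).principal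
      rw [hg, Ideal.submodule_span_eq, Ideal.mem_span_singleton] at hfI hp
      obtain ⟨q, hq⟩ := hfI
      rcases hf.isUnit_or_isUnit hq with hu | hu
      · -- g is a unit : then 1 ∈ I, contradiction with v ≠ 0
        exfalso
        have h1 : (1 : Polynomial F) ∈ I := by
          rw [hg, Ideal.submodule_span_eq, Ideal.mem_span_singleton]
          exact hu.dvd
        have h2 : (Polynomial.aeval x (1 : Polynomial F)).mulVec v = 0 := h1
        simp at h2
        exact hv0 h2
      · -- q is a unit, so natDegree g = d
        have hgne : g ≠ 0 := by
          rintro rfl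
          rw [zero_mul] at hq
          exact hf.ne_zero hq
        have hqne : q ≠ 0 := hu.ne_zero
        have hgdeg : g.natDegree = d := by
          have := Polynomial.natDegree_mul hgne hqne
          rw [← hq, hdeg, Polynomial.natDegree_eq_zero_of_isUnit hu, add_zero] at this
          omega
        obtain ⟨r, hr⟩ := hp
        have hrne : r ≠ 0 := by
          rintro rfl; rw [mul_zero] at hr; exact hp0 hr
        rw [hr, Polynomial.natDegree_mul hgne hrne, hgdeg]
        omega
    -- the family x^i • v
    set w : Fin d → (Fin d → F) := fun i => (x ^ (i : ℕ)).mulVec v with hw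
    -- evaluation formula
    have haev : ∀ c : Fin d → F,
        (Polynomial.aeval x (∑ i : Fin d, Polynomial.C (c i) * Polynomial.X ^ (i : ℕ))).mulVec v
          = ∑ i : Fin d, c i • w i := by
      intro c
      rw [map_sum, sum_mulVec']
      refine Finset.sum_congr rfl fun i _ => ?_
      rw [_root_.map_mul, Polynomial.aeval_C, map_pow, Polynomial.aeval_X]
      rw [show (algebraMap F (Matrix (Fin d) (Fin d) F)) (c i) * x ^ (i : ℕ)
          = c i • (x ^ (i : ℕ)) by rw [Algebra.smul_def]]
      rw [Matrix.smul_mulVec]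
    -- degree bound
    have hdegsum : ∀ c : Fin d → F,
        (∑ i : Fin d, Polynomial.C (c i) * Polynomial.X ^ (i : ℕ)).natDegree < d := by
      intro c
      refine lt_of_le_of_lt (Polynomial.natDegree_sum_le_of_forall_le _ _ fun i _ => ?_)
        (show d - 1 < d by omega)
      refine (Polynomial.natDegree_C_mul_le _ _).trans ?_
      refine (Polynomial.natDegree_X_pow_le (R := F) (i : ℕ)).trans ?_
      omega
    -- linear independence
    have hli : LinearIndependent F w := by
      rw [Fintype.linearIndependent_iff]
      intro c hcsum
      set p : Polynomial F := ∑ i : Fin d, Polynomial.C (c i) * Polynomial.X ^ (i : ℕ) with hp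
      have hpI : p ∈ I := by
        show (Polynomial.aeval x p).mulVec v = 0
        rw [hp, haev c, hcsum]
      have hp0 : p = 0 := by
        by_contra hne'
        have h1 := hIdeg p hpI hne'
        have h2 := hdegsum c
        rw [← hp] at h2
        omega
      intro i
      have := congrArg (fun q => Polynomial.coeff q (i : ℕ)) hp0
      simp only [hp, Polynomial.finset_sum_coeff, Polynomial.coeff_C_mul,
        Polynomial.coeff_X_pow, Polynomial.coeff_zero, mul_ite, mul_one, mul_zero] at this
      simp only [Fin.val_eq_val, Finset.sum_ite_eq, Finset.mem_univ, if_true] at this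
      exact this
    -- basis
    have hcard : Fintype.card (Fin d) = Module.finrank F (Fin d → F) := by simp
    let B := basisOfLinearIndependentOfCardEqFinrank hli hcard
    have hB : ⇑B = w := coe_basisOfLinearIndependentOfCardEqFinrank _ _
    -- representation of y *ᵥ v
    obtain ⟨c, hcrep⟩ : ∃ c : Fin d → F, y.mulVec v = ∑ i, c i • w i := by
      refine ⟨fun i => B.repr (y.mulVec v) i, ?_⟩
      conv_lhs => rw [← B.sum_repr (y.mulVec v)]
      refine Finset.sum_congr rfl fun i _ => ?_
      rw [hB]
    set p : Polynomial F := ∑ i : Fin d, Polynomial.C (c i) * Polynomial.X ^ (i : ℕ) with hp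
    have hyv : y.mulVec v = (Polynomial.aeval x p).mulVec v := by
      rw [hp, haev c, hcrep]
    -- aeval x p commutes with powers of x
    have hcommp : ∀ i : ℕ, x ^ i * Polynomial.aeval x p = Polynomial.aeval x p * x ^ i := by
      intro i
      have h1 : x ^ i * Polynomial.aeval x p = Polynomial.aeval x (Polynomial.X ^ i * p) := by
        rw [_root_.map_mul, Polynomial.aeval_X_pow]
      have h2 : Polynomial.aeval x p * x ^ i = Polynomial.aeval x (p * Polynomial.X ^ i) := by
        rw [_root_.map_mul, Polynomial.aeval_X_pow]
      rw [h1, h2, mul_comm]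
    -- y and aeval x p agree on the basis
    have hkey : ∀ i : Fin d, y.mulVec (w i) = (Polynomial.aeval x p).mulVec (w i) := by
      intro i
      have hcY : Commute x y := hc
      calc y.mulVec ((x ^ (i : ℕ)).mulVec v)
          = (y * x ^ (i : ℕ)).mulVec v := Matrix.mulVec_mulVec _ _ _
        _ = (x ^ (i : ℕ) * y).mulVec v := by rw [(hcY.pow_left (i : ℕ)).eq]
        _ = (x ^ (i : ℕ)).mulVec (y.mulVec v) := (Matrix.mulVec_mulVec _ _ _).symm
        _ = (x ^ (i : ℕ)).mulVec ((Polynomial.aeval x p).mulVec v) := by rw [hyv]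
        _ = (x ^ (i : ℕ) * Polynomial.aeval x p).mulVec v := Matrix.mulVec_mulVec _ _ _
        _ = (Polynomial.aeval x p * x ^ (i : ℕ)).mulVec v := by rw [hcommp]
        _ = (Polynomial.aeval x p).mulVec ((x ^ (i : ℕ)).mulVec v) :=
            (Matrix.mulVec_mulVec _ _ _).symm
    have hyp : y = Polynomial.aeval x p := by
      have hlin : Matrix.toLin' y = Matrix.toLin' (Polynomial.aeval x p) := by
        refine B.ext fun i => ?_
        have : B i = w i := by rw [hB]
        rw [this, Matrix.toLin'_apply, Matrix.toLin'_apply]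
        exact hkey i
      exact Matrix.toLin'.injective hlin
    rw [Algebra.adjoin_singleton_eq_range_aeval]
    exact ⟨p, hyp.symm⟩
  · rintro hy
    rw [Algebra.adjoin_singleton_eq_range_aeval] at hy
    obtain ⟨p, rfl⟩ := hy
    show x * Polynomial.aeval x p - Polynomial.aeval x p * x = 0
    have h1 : x * Polynomial.aeval x p = Polynomial.aeval x (Polynomial.X * p) := by
      rw [_root_.map_mul, Polynomial.aeval_X]
    have h2 : Polynomial.aeval x p * x = Polynomial.aeval x (p * Polynomial.X) := by
      rw [_root_.map_mul, Polynomial.aeval_X]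
    rw [h1, h2, mul_comm, sub_self]
end

section
/- Let F be a field and let M1 ∈ Mat_{n1}(F), M2 ∈ Mat_{n2}(F) have coprime characteristic polynomials. Then the bilinear map Mat_{n1×n2}(F) × Mat_{n2×n1}(F) → F given by (a,b) ↦ tr(M1·a·b) − tr(b·a·M2) is a perfect pairing (its left and right kernels are zero). -/
open Polynomial Matrix

/-- Trace against a standard basis matrix extracts an entry. -/
lemma aux_trace_single {F : Type*} [Field F] {p q : ℕ}
    (X : Matrix (Fin p) (Fin q) F) (i : Fin p) (j : Fin q) :
    (X * Matrix.single j i (1 : F)).trace = X i j := by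
  simp [Matrix.trace, Matrix.diag, Matrix.mul_apply, Matrix.single,
    ite_and, Finset.sum_ite_eq, Finset.sum_ite_eq']

lemma aux_trace_ne {F : Type*} [Field F] {p q : ℕ}
    (X : Matrix (Fin p) (Fin q) F) (h : ∀ b : Matrix (Fin q) (Fin p) F, (X * b).trace = 0) : X = 0 := by
  ext i j
  have := h (Matrix.single j i 1)
  rw [aux_trace_single] at this
  simpa using this

/-- Sylvester: if `M1 a = a M2` with coprime charpolys, then `a = 0`. -/
lemma aux_sylvester {F : Type*} [Field F] {n m : ℕ}
    (M1 : Matrix (Fin n) (Fin n) F) (M2 : Matrix (Fin m) (Fin m) F)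
    (hcop : IsCoprime M1.charpoly M2.charpoly)
    (a : Matrix (Fin n) (Fin m) F) (h : M1 * a = a * M2) : a = 0 := by
  have key : ∀ p : F[X], (Polynomial.aeval M1 p) * a = a * (Polynomial.aeval M2 p) := by
    intro p
    induction p using Polynomial.induction_on' with
    | add p q hp hq => simp [map_add, Matrix.add_mul, Matrix.mul_add, hp, hq]
    | monomial k c =>
      have hk : M1 ^ k * a = a * M2 ^ k := by
        induction k with
        | zero => simp
        | succ k ih =>
          calc M1 ^ (k + 1) * a = M1 ^ k * (M1 * a) := by
                rw [pow_succ, Matrix.mul_assoc]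
          _ = (M1 ^ k * a) * M2 := by rw [h, Matrix.mul_assoc]
          _ = a * M2 ^ (k + 1) := by rw [ih, pow_succ, Matrix.mul_assoc]
      simp only [Polynomial.aeval_monomial, Algebra.algebraMap_eq_smul_one,
        smul_mul_assoc, one_mul]
      rw [Matrix.smul_mul, Matrix.mul_smul, hk]
  obtain ⟨u, v, huv⟩ := hcop
  have huv' : M1.charpoly * u + M2.charpoly * v = 1 := by linear_combination huv
  have h1 : Polynomial.aeval M1 M1.charpoly = 0 := M1.aeval_self_charpoly
  have h2 : Polynomial.aeval M2 M2.charpoly = 0 := M2.aeval_self_charpoly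
  have hχ1 : a * Polynomial.aeval M2 M1.charpoly = 0 := by
    rw [← key, h1, Matrix.zero_mul]
  calc a = a * Polynomial.aeval M2 (M1.charpoly * u + M2.charpoly * v) := by
        rw [huv']; simp
    _ = 0 := by
        rw [map_add, _root_.map_mul, _root_.map_mul, h2, zero_mul, add_zero,
          ← Matrix.mul_assoc, hχ1, Matrix.zero_mul]

/-- For `M1`, `M2` with coprime characteristic polynomials, the bilinear map
`(a, b) ↦ tr (M1 * a * b) - tr (b * a * M2)` on
`Mat_{n1×n2}(F) × Mat_{n2×n1}(F)` is a perfect pairing: its left and right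
kernels are zero. -/
theorem stmt8 (F : Type*) [Field F] (n1 n2 : ℕ)
    (M1 : Matrix (Fin n1) (Fin n1) F) (M2 : Matrix (Fin n2) (Fin n2) F)
    (hcop : IsCoprime M1.charpoly M2.charpoly) :
    let pair : Matrix (Fin n1) (Fin n2) F → Matrix (Fin n2) (Fin n1) F → F :=
      fun a b => (M1 * a * b).trace - (b * a * M2).trace
    (∀ a : Matrix (Fin n1) (Fin n2) F, (∀ b, pair a b = 0) → a = 0) ∧
      (∀ b : Matrix (Fin n2) (Fin n1) F, (∀ a, pair a b = 0) → b = 0) := by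
  intro pair
  have hpair : ∀ (a : Matrix (Fin n1) (Fin n2) F) (b : Matrix (Fin n2) (Fin n1) F),
      pair a b = ((M1 * a - a * M2) * b).trace := by
    intro a b
    show (M1 * a * b).trace - (b * a * M2).trace = _
    rw [Matrix.sub_mul, Matrix.trace_sub]
    congr 1
    rw [Matrix.mul_assoc b a M2, Matrix.trace_mul_comm]
  have hpair' : ∀ (a : Matrix (Fin n1) (Fin n2) F) (b : Matrix (Fin n2) (Fin n1) F),
      pair a b = (a * (b * M1 - M2 * b)).trace := by
    intro a b
    show (M1 * a * b).trace - (b * a * M2).trace = _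
    rw [Matrix.mul_sub, Matrix.trace_sub]
    congr 1
    · rw [Matrix.mul_assoc M1 a b, Matrix.trace_mul_comm, Matrix.mul_assoc]
    · rw [Matrix.trace_mul_comm (b * a) M2, ← Matrix.mul_assoc, Matrix.trace_mul_comm]
  constructor
  · intro a ha
    have : M1 * a - a * M2 = 0 := by
      apply aux_trace_ne
      intro b
      rw [← hpair]; exact ha b
    exact aux_sylvester M1 M2 hcop a (by rwa [sub_eq_zero] at this)
  · intro b hb
    have hz : b * M1 - M2 * b = 0 := by
      ext i j
      have := hb (Matrix.single j i 1)
      rw [hpair', Matrix.trace_mul_comm, aux_trace_single] at this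
      simpa using this
    exact aux_sylvester M2 M1 hcop.symm b (by rw [eq_comm, ← sub_eq_zero]; exact hz)
end

section
/- Let o be a complete discrete valuation ring with finite residue field and uniformizer π, and let O = o[x] be an unramified extension generated by a root x ∈ Mat_d(o) of a monic polynomial f ∈ o[t] whose reduction mod π is irreducible. Write o_ℓ = o/(π^ℓ) and O_ℓ = O/(π^ℓ), and view Mat_m(O_ℓ) ⊆ Mat_{md}(o_ℓ). Let M ∈ Mat_{md}(o_ℓ) be such that its reduction mod π lies in Mat_m(O_1) and has characteristic polynomial f̄^m. Then M is GL_{md}(o_ℓ)-conjugate to a matrix B ∈ Mat_m(O_ℓ) whose centralizer in Mat_{md}(o_ℓ) is contained in Mat_m(O_ℓ). -/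
open Polynomial

lemma newton_lift {A : Type*} [CommRing A] :
    ∀ (n : ℕ) (I : Ideal A), I ^ n = ⊥ → ∀ (q : A[X]) (a : A), q.eval a ∈ I →
      IsUnit (q.derivative.eval a) → ∃ b, q.eval b = 0 ∧ b - a ∈ I := by
  intro n
  induction n using Nat.strong_induction_on with
  | _ n IH =>
    intro I hI q a ha ha'
    match n, hI with
    | 0, hI =>
      have h1 : (1 : A) = 0 := by
        have : (1 : A) ∈ (⊥ : Ideal A) := by rw [← hI]; simp
        simpa using this
      refine ⟨a, ?_, by simp⟩
      have : Subsingleton A := subsingleton_of_zero_eq_one h1.symm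
      exact Subsingleton.elim _ _
    | 1, hI =>
      simp only [pow_one] at hI
      subst hI
      exact ⟨a, by simpa using ha, by simp⟩
    | (n + 2), hI =>
      have hnil : ∀ z ∈ I, IsNilpotent z := fun z hz =>
        ⟨n + 2, by simpa [hI] using Ideal.pow_mem_pow hz (n + 2)⟩
      obtain ⟨u, hu⟩ := ha'
      set ε : A := -(q.eval a * ↑u⁻¹) with hε
      have hεI : ε ∈ I := by
        rw [hε]; exact I.neg_mem (I.mul_mem_right _ ha)
      obtain ⟨k, hk⟩ := q.binomExpansion a ε
      have hb1 : q.eval (a + ε) = k * ε ^ 2 := by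
        rw [hk, ← hu, hε]
        have : (↑u : A) * -(q.eval a * ↑u⁻¹) = -q.eval a := by
          rw [mul_neg, mul_comm (q.eval a), ← mul_assoc, Units.mul_inv, one_mul]
        rw [this]; ring
      have hb1' : IsUnit (q.derivative.eval (a + ε)) := by
        obtain ⟨k', hk'⟩ := q.derivative.binomExpansion a ε
        rw [hk', add_assoc]
        have h1 : (q.derivative.derivative.eval a * ε + k' * ε ^ 2) ∈ I := by
          refine I.add_mem (I.mul_mem_left _ hεI) ?_
          rw [sq, ← mul_assoc]
          exact I.mul_mem_left _ hεI
        exact (hnil _ h1).isUnit_add_left_of_commute ⟨u, hu⟩ (Commute.all _ _)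
      have hq2 : q.eval (a + ε) ∈ I ^ 2 := by
        rw [hb1, sq]
        have hre : k * ε ^ 2 = (k * ε) * ε := by ring
        rw [hre]
        exact Submodule.mul_mem_mul (I.mul_mem_left k hεI) hεI
      have hI2 : (I ^ 2) ^ (n + 1) = ⊥ := by
        rw [← pow_mul]
        have h2 : I ^ (2 * (n + 1)) ≤ I ^ (n + 2) := Ideal.pow_le_pow_right (by omega)
        exact le_bot_iff.mp (hI ▸ h2)
      obtain ⟨b, hb, hba⟩ := IH (n + 1) (by omega) (I ^ 2) hI2 q (a + ε) hq2 hb1'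
      refine ⟨b, hb, ?_⟩
      have hsum : b - a = (b - (a + ε)) + ε := by ring
      rw [hsum]
      exact I.add_mem ((Ideal.pow_le_self (by norm_num)) hba) hεI

section matlift

variable {R : Type*} [CommRing R] {S : Type*} [Ring S] [Algebra R S]

/-- Lift of `AdjoinRoot` to a possibly noncommutative algebra. -/
noncomputable def matLift (p : R[X]) (N : S) (hN : Polynomial.aeval N p = 0) : AdjoinRoot p →+* S :=
  Ideal.Quotient.lift _ (Polynomial.aeval N).toRingHom (by
    intro a ha
    obtain ⟨c, rfl⟩ := Ideal.mem_span_singleton.mp ha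
    simp [hN])

@[simp] lemma matLift_mk (p : R[X]) (N : S) (hN : Polynomial.aeval N p = 0) (q : R[X]) :
    matLift p N hN (AdjoinRoot.mk p q) = Polynomial.aeval N q := rfl

@[simp] lemma matLift_root (p : R[X]) (N : S) (hN : Polynomial.aeval N p = 0) :
    matLift p N hN (AdjoinRoot.root p) = N := by
  rw [AdjoinRoot.root, matLift_mk, Polynomial.aeval_X]

@[simp] lemma matLift_algebraMap (p : R[X]) (N : S) (hN : Polynomial.aeval N p = 0) (r : R) :
    matLift p N hN (algebraMap R (AdjoinRoot p) r) = algebraMap R S r := by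
  have : algebraMap R (AdjoinRoot p) r = AdjoinRoot.mk p (C r) := rfl
  rw [this, matLift_mk, Polynomial.aeval_C]

@[simp] lemma matLift_smul (p : R[X]) (N : S) (hN : Polynomial.aeval N p = 0) (r : R)
    (c : AdjoinRoot p) : matLift p N hN (r • c) = r • matLift p N hN c := by
  rw [Algebra.smul_def, map_mul, matLift_algebraMap, ← Algebra.smul_def]

end matlift

section helpers

variable {R S : Type*} [CommRing R] [CommRing S]

lemma aeval_matrix_map {n : Type*} [Fintype n] [DecidableEq n] (σ : R →+* S)
    (N : Matrix n n R) (q : R[X]) :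
    (Polynomial.aeval N q).map σ = Polynomial.aeval (N.map σ) (q.map σ) := by
  have hcomp : (σ.mapMatrix).comp (algebraMap R (Matrix n n R))
      = (algebraMap S (Matrix n n S)).comp σ := by
    ext r i j
    simp [Matrix.algebraMap_matrix_apply, apply_ite σ]
  have h2 : Polynomial.aeval (N.map σ) (q.map σ)
      = Polynomial.eval₂ ((algebraMap S (Matrix n n S)).comp σ) (N.map σ) q := by
    rw [Polynomial.aeval_def, Polynomial.eval₂_map]
  calc (Polynomial.aeval N q).map σ
      = σ.mapMatrix (Polynomial.eval₂ (algebraMap R (Matrix n n R)) N q) := rfl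
    _ = Polynomial.eval₂ ((σ.mapMatrix).comp (algebraMap R (Matrix n n R)))
          (σ.mapMatrix N) q := Polynomial.hom_eval₂ _ _ _ _
    _ = Polynomial.aeval (N.map σ) (q.map σ) := by rw [hcomp, h2]; rfl

lemma matrix_map_mulVec {n : Type*} [Fintype n] (σ : R →+* S) (A : Matrix n n R) (w : n → R) :
    σ ∘ (A.mulVec w) = (A.map σ).mulVec (σ ∘ w) := by
  funext i
  simp [Matrix.mulVec, dotProduct, map_sum, Function.comp]

lemma matrix_eq_of_mulVec_eq {n : Type*} [Fintype n] [DecidableEq n] {A B : Matrix n n R}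
    (h : ∀ w, A.mulVec w = B.mulVec w) : A = B := by
  ext i j
  have := congrFun (h (Pi.single j 1)) i
  simpa using this

end helpers

section basis

variable {R F : Type*} [CommRing R] [Field F] [Finite R]
variable {n : Type*} [Fintype n] [DecidableEq n]

/-- Key structural lemma: for a matrix root `N` of `p` (irreducible mod the nilpotent
uniformizer), the space `n → R` is a free `AdjoinRoot p`-module acting through `N`. -/
lemma exists_adjoinRoot_basis (ρ : R →+* F) (hρ : Function.Surjective ρ)
    (π : R) (hker : RingHom.ker ρ = Ideal.span {π}) (k : ℕ) (hnil : π ^ k = 0)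
    (p : R[X]) (hp : p.Monic) (hirr : Irreducible (p.map ρ))
    (N : Matrix n n R) (hN : Polynomial.aeval N p = 0) :
    ∃ (r : ℕ) (Φ : (Fin r → AdjoinRoot p) →ₗ[R] (n → R)),
      r * p.natDegree = Nat.card n ∧ Function.Bijective Φ ∧
      ∀ (c₀ : AdjoinRoot p) (c : Fin r → AdjoinRoot p),
        Φ (fun i => c₀ * c i) = (matLift p N hN c₀).mulVec (Φ c) := by
  classical
  haveI : Fact (Irreducible (p.map ρ)) := ⟨hirr⟩
  set pbar : F[X] := p.map ρ with hpbar
  set E := AdjoinRoot pbar with hE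
  have hFfin : Finite F := Finite.of_surjective ρ hρ
  have hpbar_monic : pbar.Monic := hp.map ρ
  have hpbar_ne : pbar ≠ 0 := hpbar_monic.ne_zero
  set Nbar : Matrix n n F := N.map ρ with hNbar
  have hNbar_root : Polynomial.aeval Nbar pbar = 0 := by
    rw [hpbar, hNbar, ← aeval_matrix_map, hN]
    simp
  set χ : E →+* Matrix n n F := matLift pbar Nbar hNbar_root with hχ
  -- E-module structure on n → F
  letI moduleE : Module E (n → F) :=
    Module.compHom (n → F)
      ((Matrix.toLinAlgEquiv' : Matrix n n F ≃ₐ[F] Module.End F (n → F)).toAlgHom.toRingHom.comp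
        χ)
  have hsmul : ∀ (e : E) (w : n → F), e • w = (χ e).mulVec w := fun _ _ => rfl
  haveI : Module.Finite F E := PowerBasis.finite (AdjoinRoot.powerBasis hpbar_ne)
  haveI hEfin : Finite E := Module.finite_of_finite F
  haveI : Module.Finite E (n → F) := by
    rw [Module.finite_iff_finite]
    infer_instance
  set r : ℕ := Module.finrank E (n → F) with hr
  set b : Module.Basis (Fin r) E (n → F) := Module.finBasis E (n → F) with hb
  -- cardinality over F
  have hFnontriv : Nontrivial F := inferInstance
  have hF2 : 2 ≤ Nat.card F := Finite.one_lt_card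
  have hdeg : pbar.natDegree = p.natDegree := hp.natDegree_map ρ
  have hEcard : Nat.card E = Nat.card F ^ p.natDegree := by
    have e1 := (AdjoinRoot.powerBasis hpbar_ne).basis.equivFun.toEquiv
    rw [Nat.card_congr e1, Nat.card_fun, Nat.card_eq_fintype_card (α := Fin _),
      Fintype.card_fin, AdjoinRoot.powerBasis_dim, hdeg]
  have hVcard : Nat.card (n → F) = Nat.card E ^ r := by
    have e1 := b.equivFun.toEquiv
    rw [Nat.card_congr e1, Nat.card_fun, Nat.card_eq_fintype_card (α := Fin r),
      Fintype.card_fin]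
  have hrd : r * p.natDegree = Nat.card n := by
    have h1 : Nat.card F ^ (r * p.natDegree) = Nat.card F ^ Nat.card n := by
      rw [mul_comm, pow_mul, ← hEcard, ← hVcard, Nat.card_fun]
    exact Nat.pow_right_injective hF2 h1
  -- lift the basis vectors
  set v : Fin r → (n → R) := fun i => Function.surjInv hρ ∘ b i with hv_def
  have hv : ∀ i, ρ ∘ v i = b i := fun i => funext fun j => Function.surjInv_eq hρ _
  set ψ : AdjoinRoot p →+* Matrix n n R := matLift p N hN with hψ
  set Φ : (Fin r → AdjoinRoot p) →ₗ[R] (n → R) :=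
    { toFun := fun c => ∑ i, (ψ (c i)).mulVec (v i)
      map_add' := by
        intro c₁ c₂
        simp only [Pi.add_apply, map_add, Matrix.add_mulVec]
        rw [Finset.sum_add_distrib]
      map_smul' := by
        intro s c
        simp only [Pi.smul_apply, RingHom.id_apply, hψ, matLift_smul,
          Matrix.smul_mulVec, Finset.smul_sum] } with hΦ_def
  have hΦ_apply : ∀ c, Φ c = ∑ i, (ψ (c i)).mulVec (v i) := fun _ => rfl
  have hmul : ∀ (c₀ : AdjoinRoot p) (c : Fin r → AdjoinRoot p),
      Φ (fun i => c₀ * c i) = (ψ c₀).mulVec (Φ c) := by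
    intro c₀ c
    rw [hΦ_apply, hΦ_apply, ← Matrix.mulVecLin_apply, map_sum]
    refine Finset.sum_congr rfl fun i _ => ?_
    rw [Matrix.mulVecLin_apply, map_mul, ← Matrix.mulVec_mulVec]
  -- the reduction homomorphism θ : AdjoinRoot p →+* E
  have hθker : ∀ a ∈ Ideal.span ({p} : Set R[X]),
      (AdjoinRoot.mk pbar).comp (Polynomial.mapRingHom ρ) a = 0 := by
    intro a ha
    obtain ⟨c, rfl⟩ := Ideal.mem_span_singleton.mp ha
    simp only [RingHom.comp_apply, Polynomial.coe_mapRingHom, Polynomial.map_mul]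
    rw [← hpbar, map_mul, AdjoinRoot.mk_self, zero_mul]
  set θ : AdjoinRoot p →+* E :=
    Ideal.Quotient.lift _ ((AdjoinRoot.mk pbar).comp (Polynomial.mapRingHom ρ)) hθker with hθ
  have hθmk : ∀ q : R[X], θ (AdjoinRoot.mk p q) = AdjoinRoot.mk pbar (q.map ρ) := fun _ => rfl
  have hθsurj : Function.Surjective θ := by
    intro e
    obtain ⟨s, rfl⟩ := AdjoinRoot.mk_surjective e
    obtain ⟨t, rfl⟩ := Polynomial.map_surjective ρ hρ s
    exact ⟨AdjoinRoot.mk p t, rfl⟩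
  have hcompat : ∀ c : AdjoinRoot p, (ψ c).map ρ = χ (θ c) := by
    intro c
    obtain ⟨q, rfl⟩ := AdjoinRoot.mk_surjective c
    rw [hθmk]
    show (Polynomial.aeval N q).map ρ = Polynomial.aeval Nbar (q.map ρ)
    rw [aeval_matrix_map]
  have hΦred : ∀ c, ρ ∘ (Φ c) = ∑ i, (θ (c i)) • (b i) := by
    intro c
    rw [hΦ_apply]
    funext j
    rw [Function.comp_apply, Finset.sum_apply, Finset.sum_apply, map_sum]
    refine Finset.sum_congr rfl fun i _ => ?_
    rw [hsmul]
    have h1 : ρ ((ψ (c i)).mulVec (v i) j) = (((ψ (c i)).map ρ).mulVec (ρ ∘ v i)) j :=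
      congrFun (matrix_map_mulVec ρ _ _) j
    rw [h1, hcompat, hv]
  -- Nakayama step mod π
  have step0 : ∀ u : n → R, ∃ c : Fin r → AdjoinRoot p,
      ∀ j, u j - Φ c j ∈ Ideal.span ({π} : Set R) := by
    intro u
    set ubar : n → F := ρ ∘ u with hubar
    set c : Fin r → AdjoinRoot p := fun i => Function.surjInv hθsurj (b.repr ubar i) with hc
    refine ⟨c, fun j => ?_⟩
    rw [← hker, RingHom.mem_ker, map_sub]
    have h2 : ρ (Φ c j) = ubar j := by
      have h1 := congrFun (hΦred c) j
      rw [Function.comp_apply] at h1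
      rw [h1]
      have h3 : ∀ i, θ (c i) = b.repr ubar i := fun i => Function.surjInv_eq hθsurj _
      have h4 : (∑ i, θ (c i) • b i) = ubar := by
        rw [← b.sum_repr ubar]
        exact Finset.sum_congr rfl fun i _ => by rw [h3 i]
      exact congrFun h4 j
    rw [h2]
    simp [hubar]
  -- Nakayama induction
  have stepk : ∀ (j : ℕ) (u : n → R), ∃ c, ∀ a, u a - Φ c a ∈ Ideal.span ({π ^ j} : Set R) := by
    intro j
    induction j with
    | zero =>
      intro u
      refine ⟨0, fun a => ?_⟩
      rw [pow_zero, Ideal.span_singleton_one]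
      exact Submodule.mem_top
    | succ j ih =>
      intro u
      obtain ⟨c, hc⟩ := ih u
      choose w hw using fun a => Ideal.mem_span_singleton'.mp (hc a)
      obtain ⟨c', hc'⟩ := step0 w
      choose z hz using fun a => Ideal.mem_span_singleton'.mp (hc' a)
      refine ⟨c + (π ^ j) • c', fun a => ?_⟩
      rw [map_add, LinearMap.map_smul, Ideal.mem_span_singleton']
      refine ⟨z a, ?_⟩
      have h2 := hw a
      have h3 := hz a
      have ha : (Φ c + π ^ j • Φ c') a = Φ c a + π ^ j * Φ c' a := rfl
      rw [Pi.add_apply] at ha ⊢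
      rw [show (π ^ j • Φ c') a = π ^ j * Φ c' a from rfl]
      linear_combination π ^ j * h3 + h2
  have hsurjΦ : Function.Surjective Φ := by
    intro u
    obtain ⟨c, hc⟩ := stepk k u
    refine ⟨c, ?_⟩
    funext a
    have h5 := hc a
    rw [hnil] at h5
    have h6 : u a - Φ c a = 0 := by
      rw [show ({(0:R)} : Set R) = ((0 : Submodule R R) : Set R) by simp,
        Ideal.span_eq_bot.mpr (by simp)] at h5
      simpa using h5
    exact (sub_eq_zero.mp h6).symm
  haveI : Module.Finite R (AdjoinRoot p) := (AdjoinRoot.powerBasis' hp).finite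
  haveI hOfin : Finite (AdjoinRoot p) := Module.finite_of_finite R
  have hOcard : Nat.card (AdjoinRoot p) = Nat.card R ^ p.natDegree := by
    have e1 := (AdjoinRoot.powerBasis' hp).basis.equivFun.toEquiv
    rw [Nat.card_congr e1, Nat.card_fun, Nat.card_eq_fintype_card (α := Fin _),
      Fintype.card_fin, AdjoinRoot.powerBasis'_dim]
  have hcards : Nat.card (Fin r → AdjoinRoot p) = Nat.card (n → R) := by
    rw [Nat.card_fun, Nat.card_fun, hOcard, ← pow_mul, Nat.card_eq_fintype_card (α := Fin r),
      Fintype.card_fin, mul_comm p.natDegree r, hrd]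
  have hbij : Function.Bijective Φ := (Nat.bijective_iff_surjective_and_card Φ).mpr ⟨hsurjΦ, hcards⟩
  exact ⟨r, Φ, hrd, hbij, hmul⟩


omit [Finite R] in
lemma monic_natDegree_pos {p : R[X]} (hp : p.Monic) {σ : R →+* F}
    (hirr : Irreducible (p.map σ)) : 1 ≤ p.natDegree := by
  by_contra h
  have h0 : p.natDegree = 0 := by omega
  have h1 : p = 1 := hp.natDegree_eq_zero.mp h0
  rw [h1, Polynomial.map_one] at hirr
  exact hirr.not_isUnit isUnit_one

/-- Any two matrix roots of `p` are conjugate. -/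
lemma conj_of_two_roots (ρ : R →+* F) (hρ : Function.Surjective ρ)
    (π : R) (hker : RingHom.ker ρ = Ideal.span {π}) (k : ℕ) (hnil : π ^ k = 0)
    (p : R[X]) (hp : p.Monic) (hirr : Irreducible (p.map ρ))
    (Y X : Matrix n n R) (hY : Polynomial.aeval Y p = 0) (hX : Polynomial.aeval X p = 0) :
    ∃ G G' : Matrix n n R, G * G' = 1 ∧ G' * G = 1 ∧ G * Y = X * G := by
  obtain ⟨r₁, Φ₁, hc₁, hb₁, hm₁⟩ := exists_adjoinRoot_basis ρ hρ π hker k hnil p hp hirr Y hY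
  obtain ⟨r₂, Φ₂, hc₂, hb₂, hm₂⟩ := exists_adjoinRoot_basis ρ hρ π hker k hnil p hp hirr X hX
  have hd1 : 1 ≤ p.natDegree := monic_natDegree_pos hp hirr
  have hrr : r₁ = r₂ := Nat.eq_of_mul_eq_mul_right (by omega) (hc₁.trans hc₂.symm)
  subst hrr
  set e₁ := LinearEquiv.ofBijective Φ₁ hb₁ with he₁
  set e₂ := LinearEquiv.ofBijective Φ₂ hb₂ with he₂
  set gLin := (e₂.toLinearMap) ∘ₗ (e₁.symm.toLinearMap) with hgLin
  set gLin' := (e₁.toLinearMap) ∘ₗ (e₂.symm.toLinearMap) with hgLin'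
  set G := LinearMap.toMatrix' gLin with hG_def
  set G' := LinearMap.toMatrix' gLin' with hG'_def
  have hGG' : G * G' = 1 := by
    rw [hG_def, hG'_def, ← LinearMap.toMatrix'_comp, ← LinearMap.toMatrix'_id (R := R) (n := n)]
    congr 1
    ext w
    simp [hgLin, hgLin']
  have hG'G : G' * G = 1 := by
    rw [hG_def, hG'_def, ← LinearMap.toMatrix'_comp, ← LinearMap.toMatrix'_id (R := R) (n := n)]
    congr 1
    ext w
    simp [hgLin, hgLin']
  have hgΦ : ∀ c, gLin (Φ₁ c) = Φ₂ c := by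
    intro c
    have h1 : e₁.symm (Φ₁ c) = c := e₁.symm_apply_apply c
    simp only [hgLin, LinearMap.comp_apply, LinearEquiv.coe_coe]
    rw [show Φ₁ c = e₁ c from rfl, e₁.symm_apply_apply]
    rfl
  have hint : ∀ w, gLin (Y.mulVec w) = X.mulVec (gLin w) := by
    intro w
    obtain ⟨c, rfl⟩ := hb₁.2 w
    have h1 : Y.mulVec (Φ₁ c) = Φ₁ (fun i => AdjoinRoot.root p * c i) := by
      rw [hm₁ (AdjoinRoot.root p) c, matLift_root]
    rw [h1, hgΦ, hgΦ, hm₂ (AdjoinRoot.root p) c, matLift_root]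
  have hGmul : ∀ u, G.mulVec u = gLin u := by
    intro u
    calc G.mulVec u = Matrix.toLin' G u := (Matrix.toLin'_apply _ _).symm
      _ = gLin u := by rw [hG_def, Matrix.toLin'_toMatrix']
  have hGY : G * Y = X * G := by
    apply matrix_eq_of_mulVec_eq
    intro w
    rw [← Matrix.mulVec_mulVec, ← Matrix.mulVec_mulVec, hGmul, hGmul, hint]
  exact ⟨G, G', hGG', hG'G, hGY⟩

/-- If `Nat.card n = deg p`, any matrix commuting with a root `N` of `p` is a polynomial
in `N`. -/
lemma commutant_of_root (ρ : R →+* F) (hρ : Function.Surjective ρ)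
    (π : R) (hker : RingHom.ker ρ = Ideal.span {π}) (k : ℕ) (hnil : π ^ k = 0)
    (p : R[X]) (hp : p.Monic) (hirr : Irreducible (p.map ρ))
    (hn : Nat.card n = p.natDegree)
    (N : Matrix n n R) (hN : Polynomial.aeval N p = 0)
    (y : Matrix n n R) (hy : y * N = N * y) : ∃ q : R[X], y = Polynomial.aeval N q := by
  obtain ⟨r, Φ, hc, hb, hm⟩ := exists_adjoinRoot_basis ρ hρ π hker k hnil p hp hirr N hN
  have hd1 : 1 ≤ p.natDegree := monic_natDegree_pos hp hirr
  have hr1 : r = 1 := by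
    have h1 : r * p.natDegree = 1 * p.natDegree := by rw [hc, hn, one_mul]
    exact Nat.eq_of_mul_eq_mul_right (by omega) h1
  subst hr1
  set ψ : AdjoinRoot p →+* Matrix n n R := matLift p N hN with hψ
  have hcomm : ∀ c : AdjoinRoot p, y * ψ c = ψ c * y := by
    intro c
    obtain ⟨q, rfl⟩ := AdjoinRoot.mk_surjective c
    rw [hψ, matLift_mk]
    have h1 : (Polynomial.aeval N) q ∈ Algebra.adjoin R {N} := by
      rw [Algebra.adjoin_singleton_eq_range_aeval]
      exact ⟨q, rfl⟩
    exact Algebra.commute_of_mem_adjoin_singleton_of_commute h1 hy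
  set v0 : n → R := Φ (fun _ => 1) with hv0
  obtain ⟨cy, hcy⟩ := hb.2 (y.mulVec v0)
  have hsingle : ∀ c : Fin 1 → AdjoinRoot p, Φ c = (ψ (c 0)).mulVec v0 := by
    intro c
    have h1 : c = fun i => c 0 * 1 := by
      funext i
      rw [Subsingleton.elim i 0, mul_one]
    rw [h1, hm (c 0) (fun _ => 1)]
    simp [hv0]
  have key : ∀ w, y.mulVec w = (ψ (cy 0)).mulVec w := by
    intro w
    obtain ⟨c, rfl⟩ := hb.2 w
    rw [hsingle c]
    calc y.mulVec ((ψ (c 0)).mulVec v0)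
        = (y * ψ (c 0)).mulVec v0 := by rw [Matrix.mulVec_mulVec]
      _ = (ψ (c 0) * y).mulVec v0 := by rw [hcomm]
      _ = (ψ (c 0)).mulVec (y.mulVec v0) := by rw [Matrix.mulVec_mulVec]
      _ = (ψ (c 0)).mulVec (Φ cy) := by rw [hcy]
      _ = (ψ (c 0)).mulVec ((ψ (cy 0)).mulVec v0) := by rw [hsingle cy]
      _ = (ψ (c 0) * ψ (cy 0)).mulVec v0 := by rw [Matrix.mulVec_mulVec]
      _ = (ψ (cy 0) * ψ (c 0)).mulVec v0 := by rw [← map_mul, ← map_mul, mul_comm]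
      _ = (ψ (cy 0)).mulVec ((ψ (c 0)).mulVec v0) := by rw [Matrix.mulVec_mulVec]
  have hy_eq : y = ψ (cy 0) := matrix_eq_of_mulVec_eq key
  obtain ⟨q, hq⟩ := AdjoinRoot.mk_surjective (cy 0)
  exact ⟨q, by rw [hy_eq, ← hq, hψ, matLift_mk]⟩

omit [Finite R] in
lemma ringHom_aeval_commute {A S : Type*} [Ring A] [Ring S] [Algebra R A] [Algebra R S]
    (g : A →+* S) (hg : ∀ r, g (algebraMap R A r) = algebraMap R S r) (x : A) (p : R[X]) :
    g (Polynomial.aeval x p) = Polynomial.aeval (g x) p := by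
  rw [Polynomial.aeval_def, Polynomial.aeval_def, Polynomial.hom_eval₂]
  congr 1
  ext r
  simp [hg]

/-- Lifting a root of `p` out of a matrix whose characteristic polynomial reduces to a
power of the irreducible `p.map ρ`. -/
lemma exists_root_polynomial_in (ρ : R →+* F) (hρ : Function.Surjective ρ)
    (π : R) (hker : RingHom.ker ρ = Ideal.span {π}) (k : ℕ) (hnil : π ^ k = 0)
    (p : R[X]) (hp : p.Monic) (hirr : Irreducible (p.map ρ)) (m : ℕ)
    (M : Matrix n n R) (hcp : M.charpoly.map ρ = (p.map ρ) ^ m) :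
    ∃ q : R[X], Polynomial.aeval (Polynomial.aeval M q) p = 0 := by
  classical
  haveI hFfin : Finite F := Finite.of_surjective ρ hρ
  haveI : IsNoetherian R R := isNoetherian_of_finite R R
  haveI : IsNoetherianRing R := inferInstance
  set A := AdjoinRoot M.charpoly with hA
  haveI : IsNoetherianRing A := by
    have h1 : Function.Surjective (AdjoinRoot.mk M.charpoly) := AdjoinRoot.mk_surjective
    exact isNoetherianRing_of_surjective _ _ _ h1
  set φA : A →+* Matrix n n R := matLift M.charpoly M (Matrix.aeval_self_charpoly M) with hφA
  set α : A := AdjoinRoot.root M.charpoly with hα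
  set πA : A := algebraMap R A π with hπA
  set t : A := Polynomial.aeval α p with ht_def
  -- `M.charpoly - p ^ m` is divisible by `C π`
  have hmemC : ∀ w : R[X], w.map ρ = 0 → ∃ h : R[X], h * C π = w := by
    intro w hw
    have h1 : w ∈ RingHom.ker (Polynomial.mapRingHom ρ) := by
      rw [RingHom.mem_ker]
      exact hw
    rw [Polynomial.ker_mapRingHom, hker, Ideal.map_span, Set.image_singleton] at h1
    exact Ideal.mem_span_singleton'.mp h1
  obtain ⟨h, hh⟩ := hmemC (M.charpoly - p ^ m)
    (by rw [Polynomial.map_sub, hcp, Polynomial.map_pow, sub_self])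
  have haevalcp : Polynomial.aeval α M.charpoly = 0 := by
    rw [hα, AdjoinRoot.aeval_eq, AdjoinRoot.mk_self]
  have h2 : t ^ m = -(Polynomial.aeval α h) * πA := by
    have h3 := congrArg (Polynomial.aeval α) hh
    rw [map_mul, map_sub, haevalcp, Polynomial.aeval_C, map_pow] at h3
    rw [ht_def, hπA]
    linear_combination h3
  set I : Ideal A := Ideal.span {πA} ⊔ Ideal.span {t} with hI_def
  have hπA_nil : IsNilpotent πA := ⟨k, by rw [hπA, ← map_pow, hnil, map_zero]⟩
  have ht_nil : IsNilpotent t := by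
    refine ⟨m * k, ?_⟩
    rw [pow_mul, h2, mul_pow, hπA, ← map_pow, hnil, map_zero, mul_zero]
  have hI_nil : ∃ NN, NN ≠ 0 ∧ I ^ NN = ⊥ := by
    obtain ⟨NN, hNN⟩ := IsNoetherianRing.isNilpotent_nilradical A
    refine ⟨NN + 1, by omega, ?_⟩
    have hle : I ≤ nilradical A := by
      rw [hI_def, sup_le_iff]
      constructor <;> rw [Ideal.span_le, Set.singleton_subset_iff] <;>
        [exact mem_nilradical.mpr hπA_nil; exact mem_nilradical.mpr ht_nil]
    have h4 : I ^ (NN + 1) ≤ nilradical A ^ (NN + 1) := Ideal.pow_right_mono hle _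
    have h5 : nilradical A ^ (NN + 1) ≤ nilradical A ^ NN :=
      Ideal.pow_le_pow_right (by omega)
    have h6 : nilradical A ^ (NN + 1) ≤ ⊥ := by rw [← Ideal.zero_eq_bot, ← hNN]; exact h5
    exact le_bot_iff.mp (h4.trans h6)
  obtain ⟨NN, hNN0, hNN⟩ := hI_nil
  have htI : t ∈ I := by
    refine Ideal.mem_sup_right ?_
    exact Ideal.subset_span rfl
  have hπI : πA ∈ I := by
    refine Ideal.mem_sup_left ?_
    exact Ideal.subset_span rfl
  -- derivative is a unit
  haveI : PerfectField F := PerfectField.ofFinite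
  have hsep : (p.map ρ).Separable := PerfectField.separable_of_irreducible hirr
  obtain ⟨abar, bbar, hab⟩ := hsep
  obtain ⟨a, ha⟩ := Polynomial.map_surjective ρ hρ abar
  obtain ⟨b, hb⟩ := Polynomial.map_surjective ρ hρ bbar
  obtain ⟨h₂, hh₂⟩ := hmemC (a * p + b * derivative p - 1) (by
    rw [Polynomial.map_sub, Polynomial.map_add, Polynomial.map_mul, Polynomial.map_mul,
      ← Polynomial.derivative_map, ha, hb, Polynomial.map_one, hab, sub_self])
  have h6 := congrArg (Polynomial.aeval α) hh₂
  rw [map_mul, map_sub, map_add, map_mul, map_mul, Polynomial.aeval_C, map_one] at h6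
  set i : A := Polynomial.aeval α h₂ * πA - Polynomial.aeval α a * t with hi_def
  have hiI : i ∈ I := by
    refine Submodule.sub_mem _ (I.mul_mem_left _ hπI) (I.mul_mem_left _ htI)
  have hi_nil : IsNilpotent i := ⟨NN, by simpa [hNN] using Ideal.pow_mem_pow hiI NN⟩
  have h7 : Polynomial.aeval α b * Polynomial.aeval α (derivative p) = 1 + i := by
    rw [hi_def, ht_def]
    linear_combination -h6
  have hunit : IsUnit (Polynomial.aeval α (derivative p)) := by
    have h8 : IsUnit (1 + i) := by
      have := hi_nil.isUnit_add_left_of_commute isUnit_one (Commute.all _ _)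
      simpa [add_comm] using this
    rw [← h7] at h8
    exact isUnit_of_mul_isUnit_right h8
  -- Newton iteration
  set q' : A[X] := p.map (algebraMap R A) with hq'
  have hq'eval : q'.eval α = t := by
    rw [hq', Polynomial.eval_map, ← Polynomial.aeval_def, ht_def]
  have hq'der : q'.derivative.eval α = Polynomial.aeval α (derivative p) := by
    rw [hq', Polynomial.derivative_map, Polynomial.eval_map, ← Polynomial.aeval_def]
  obtain ⟨β, hβroot, hβI⟩ := newton_lift NN I hNN q' α (by rw [hq'eval]; exact htI)
    (by rw [hq'der]; exact hunit)
  obtain ⟨qβ, hqβ⟩ := AdjoinRoot.mk_surjective β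
  refine ⟨qβ, ?_⟩
  have hY : Polynomial.aeval M qβ = φA β := by rw [← hqβ, hφA, matLift_mk]
  have hβp : Polynomial.aeval β p = 0 := by
    rw [Polynomial.aeval_def, ← Polynomial.eval_map, ← hq', hβroot]
  rw [hY, ← ringHom_aeval_commute φA (fun r => by rw [hφA, matLift_algebraMap]) β p, hβp,
    map_zero]

end basis

section blockdiag

variable {R : Type*} [CommRing R] {m d : Type*} [Fintype m] [Fintype d]
  [DecidableEq m] [DecidableEq d]

/-- The block-scalar embedding `Mat_d(R) → Mat_{m×d}(R)`. -/
def blockScalar : Matrix d d R →ₐ[R] Matrix (m × d) (m × d) R where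
  toFun z := Matrix.of fun p q => if p.1 = q.1 then z p.2 q.2 else 0
  map_one' := by
    ext ⟨i, a⟩ ⟨j, b⟩
    by_cases h : i = j <;> simp [Matrix.one_apply, Prod.ext_iff, h]
  map_mul' := by
    intro z w
    ext ⟨i, a⟩ ⟨j, b⟩
    by_cases h : i = j <;>
      simp [Matrix.mul_apply, Fintype.sum_prod_type, h, ite_mul, Finset.sum_ite_eq,
        Finset.sum_ite_eq']
  map_zero' := by ext ⟨i, a⟩ ⟨j, b⟩; simp
  map_add' := by
    intro z w
    ext ⟨i, a⟩ ⟨j, b⟩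
    by_cases h : i = j <;> simp [h]
  commutes' := by
    intro r
    ext ⟨i, a⟩ ⟨j, b⟩
    by_cases h : i = j <;> simp [Matrix.algebraMap_matrix_apply, Prod.ext_iff, h]

lemma mul_blockScalar_apply (z : Matrix d d R) (y : Matrix (m × d) (m × d) R)
    (i j : m) (a b : d) :
    (y * (blockScalar z : Matrix (m × d) (m × d) R)) (i, a) (j, b)
      = ((Matrix.of fun a b => y (i, a) (j, b)) * z) a b := by
  simp [Matrix.mul_apply, blockScalar, Fintype.sum_prod_type, Finset.sum_ite_eq,
    Finset.sum_ite_eq', mul_ite]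

lemma blockScalar_mul_apply (z : Matrix d d R) (y : Matrix (m × d) (m × d) R)
    (i j : m) (a b : d) :
    ((blockScalar z : Matrix (m × d) (m × d) R) * y) (i, a) (j, b)
      = (z * (Matrix.of fun a b => y (i, a) (j, b))) a b := by
  simp [Matrix.mul_apply, blockScalar, Fintype.sum_prod_type, Finset.sum_ite_eq,
    Finset.sum_ite_eq', ite_mul]

lemma commute_blockScalar_iff (z : Matrix d d R) (y : Matrix (m × d) (m × d) R) :
    y * (blockScalar z : Matrix (m × d) (m × d) R) = (blockScalar z) * y ↔
      ∀ i j, (Matrix.of fun a b => y (i, a) (j, b)) * z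
        = z * (Matrix.of fun a b => y (i, a) (j, b)) := by
  constructor
  · intro h i j
    ext a b
    have := congrFun (congrFun h (i, a)) (j, b)
    rw [mul_blockScalar_apply, blockScalar_mul_apply] at this
    exact this
  · intro h
    ext ⟨i, a⟩ ⟨j, b⟩
    rw [mul_blockScalar_apply, blockScalar_mul_apply, h i j]

end blockdiag

section finq

variable {o : Type*} [CommRing o] {π : o}

lemma finite_quotient_span_pow (h1 : Finite (o ⧸ Ideal.span ({π} : Set o))) :
    ∀ ℓ : ℕ, Finite (o ⧸ Ideal.span ({π ^ ℓ} : Set o)) := by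
  intro ℓ
  induction ℓ with
  | zero =>
    have hsub : Subsingleton (o ⧸ Ideal.span ({π ^ 0} : Set o)) := by
      rw [Ideal.Quotient.subsingleton_iff]
      rw [pow_zero, Ideal.span_singleton_one]
    infer_instance
  | succ i ih =>
    set mk1 := Ideal.Quotient.mk (Ideal.span ({π} : Set o)) with hmk1
    set mki := Ideal.Quotient.mk (Ideal.span ({π ^ i} : Set o)) with hmki
    set mkS := Ideal.Quotient.mk (Ideal.span ({π ^ (i + 1)} : Set o)) with hmkS
    set rep1 : (o ⧸ Ideal.span ({π} : Set o)) → o :=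
      Function.surjInv Ideal.Quotient.mk_surjective with hrep1
    set repi : (o ⧸ Ideal.span ({π ^ i} : Set o)) → o :=
      Function.surjInv Ideal.Quotient.mk_surjective with hrepi
    set σ : (o ⧸ Ideal.span ({π} : Set o)) × (o ⧸ Ideal.span ({π ^ i} : Set o))
        → (o ⧸ Ideal.span ({π ^ (i + 1)} : Set o)) :=
      fun cz => mkS (π ^ i * rep1 cz.1 + repi cz.2) with hσ
    have hσsurj : Function.Surjective σ := by
      intro w
      obtain ⟨y, rfl⟩ := Ideal.Quotient.mk_surjective (I := Ideal.span ({π ^ (i + 1)} : Set o)) w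
      set z := mki y with hz
      have h2 : repi z - y ∈ Ideal.span ({π ^ i} : Set o) := by
        rw [← Ideal.Quotient.eq]
        exact Function.surjInv_eq Ideal.Quotient.mk_surjective z
      obtain ⟨a, hA⟩ := Ideal.mem_span_singleton'.mp h2
      set c := mk1 (-a) with hc
      have h3 : rep1 c + a ∈ Ideal.span ({π} : Set o) := by
        have h4 : rep1 c - (-a) ∈ Ideal.span ({π} : Set o) := by
          rw [← Ideal.Quotient.eq]
          exact Function.surjInv_eq Ideal.Quotient.mk_surjective c
        simpa [sub_neg_eq_add] using h4
      obtain ⟨bb, hbb⟩ := Ideal.mem_span_singleton'.mp h3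
      refine ⟨(c, z), ?_⟩
      rw [hσ]
      rw [Ideal.Quotient.eq]
      rw [Ideal.mem_span_singleton']
      refine ⟨bb, ?_⟩
      have : π ^ i * rep1 c + repi z - y = π ^ i * (rep1 c + a) := by
        linear_combination -hA
      rw [this, ← hbb]
      ring
    exact Finite.of_surjective σ hσsurj

end finq

/-- Let `o` be a complete DVR with finite residue field and uniformizer `π`, and
`O = o[x]` the unramified extension generated by a root `x ∈ Mat_d(o)` of a monic
polynomial `f ∈ o[t]` with irreducible reduction mod `π`.  Write `o_ℓ = o/(π^ℓ)`,
identify `Mat_{md}(o_ℓ)` with matrices indexed by `Fin m × Fin d`, and realise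
`Mat_m(O_ℓ)` as the block matrices all of whose `d × d` blocks lie in the subalgebra
of `Mat_d(o_ℓ)` generated by the reduction of `x`.  If `M ∈ Mat_{md}(o_ℓ)` has
reduction mod `π` lying in `Mat_m(O_1)` with characteristic polynomial `f̄^m`, then
`M` is `GL_{md}(o_ℓ)`-conjugate to a matrix `B ∈ Mat_m(O_ℓ)` whose centralizer in
`Mat_{md}(o_ℓ)` is contained in `Mat_m(O_ℓ)`. -/
theorem stmt13 (o : Type*) [CommRing o] [IsDomain o] [IsDiscreteValuationRing o]
    [IsAdicComplete (IsLocalRing.maximalIdeal o) o]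
    [Finite (IsLocalRing.ResidueField o)]
    (π : o) (hπ : Irreducible π) (ℓ d m : ℕ) (hℓ : 1 ≤ ℓ)
    (hle : Ideal.span {π ^ ℓ} ≤ Ideal.span {π})
    (f : Polynomial o) (hmonic : f.Monic) (hd : f.natDegree = d)
    (hfbar : Irreducible (f.map (Ideal.Quotient.mk (Ideal.span {π}))))
    (x : Matrix (Fin d) (Fin d) o) (hx : Polynomial.aeval x f = 0) :
    let Rℓ := o ⧸ Ideal.span {π ^ ℓ}
    let R1 := o ⧸ Ideal.span ({π} : Set o)
    let red : Rℓ →+* R1 := Ideal.Quotient.factor hle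
    let xℓ : Matrix (Fin d) (Fin d) Rℓ := x.map (Ideal.Quotient.mk _)
    let x1 : Matrix (Fin d) (Fin d) R1 := x.map (Ideal.Quotient.mk _)
    let blkℓ : Matrix (Fin m × Fin d) (Fin m × Fin d) Rℓ → Fin m → Fin m →
        Matrix (Fin d) (Fin d) Rℓ := fun M i j => Matrix.of fun a b => M (i, a) (j, b)
    let blk1 : Matrix (Fin m × Fin d) (Fin m × Fin d) R1 → Fin m → Fin m →
        Matrix (Fin d) (Fin d) R1 := fun M i j => Matrix.of fun a b => M (i, a) (j, b)
    ∀ M : Matrix (Fin m × Fin d) (Fin m × Fin d) Rℓ,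
      (∀ i j, blk1 (M.map red) i j ∈ Algebra.adjoin R1 ({x1} : Set (Matrix (Fin d) (Fin d) R1))) →
      (M.map red).charpoly = (f.map (Ideal.Quotient.mk (Ideal.span {π}))) ^ m →
      ∃ (g : (Matrix (Fin m × Fin d) (Fin m × Fin d) Rℓ)ˣ)
        (B : Matrix (Fin m × Fin d) (Fin m × Fin d) Rℓ),
        (∀ i j, blkℓ B i j ∈ Algebra.adjoin Rℓ ({xℓ} : Set (Matrix (Fin d) (Fin d) Rℓ))) ∧
        ((g : Matrix (Fin m × Fin d) (Fin m × Fin d) Rℓ) * M *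
          ((g⁻¹ : (Matrix (Fin m × Fin d) (Fin m × Fin d) Rℓ)ˣ) :
            Matrix (Fin m × Fin d) (Fin m × Fin d) Rℓ) = B) ∧
        (∀ y, B * y = y * B →
          ∀ i j, blkℓ y i j ∈ Algebra.adjoin Rℓ ({xℓ} : Set (Matrix (Fin d) (Fin d) Rℓ))) := by
  intro Rℓ R1 red xℓ x1 blkℓ blk1 M hM1 hcp0
  classical
  -- basic instances
  have hmaxeq : IsLocalRing.maximalIdeal o = Ideal.span ({π} : Set o) := hπ.maximalIdeal_eq
  haveI hmax : (Ideal.span ({π} : Set o)).IsMaximal := by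
    rw [← hmaxeq]; exact IsLocalRing.maximalIdeal.isMaximal o
  letI : Field R1 := Ideal.Quotient.field _
  haveI hR1fin : Finite R1 := by
    haveI hfin : Finite (o ⧸ IsLocalRing.maximalIdeal o) :=
      ‹Finite (IsLocalRing.ResidueField o)›
    exact Finite.of_equiv (o ⧸ IsLocalRing.maximalIdeal o) (Ideal.quotEquivOfEq hmaxeq).toEquiv
  haveI hRℓfin : Finite Rℓ := finite_quotient_span_pow hR1fin ℓ
  set mkℓ : o →+* Rℓ := Ideal.Quotient.mk _ with hmkℓ
  set mk1 : o →+* R1 := Ideal.Quotient.mk _ with hmk1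
  have hfactor : ∀ y : o, red (mkℓ y) = mk1 y := fun y => Ideal.Quotient.factor_mk hle y
  have hredsurj : Function.Surjective red := by
    intro z
    obtain ⟨y, rfl⟩ := Ideal.Quotient.mk_surjective (I := Ideal.span ({π} : Set o)) z
    exact ⟨mkℓ y, hfactor y⟩
  set πb : Rℓ := mkℓ π with hπb
  have hπbnil : πb ^ ℓ = 0 := by
    rw [hπb, ← map_pow, Ideal.Quotient.eq_zero_iff_mem]
    exact Ideal.subset_span rfl
  have hker : RingHom.ker red = Ideal.span ({πb} : Set Rℓ) := by
    ext z
    constructor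
    · intro hz
      rw [RingHom.mem_ker] at hz
      obtain ⟨y, rfl⟩ := Ideal.Quotient.mk_surjective (I := Ideal.span ({π ^ ℓ} : Set o)) z
      rw [hfactor] at hz
      rw [Ideal.Quotient.eq_zero_iff_mem] at hz
      obtain ⟨a, ha⟩ := Ideal.mem_span_singleton'.mp hz
      rw [Ideal.mem_span_singleton']
      exact ⟨mkℓ a, by rw [hπb, ← map_mul, ha]⟩
    · intro hz
      obtain ⟨c, hc⟩ := Ideal.mem_span_singleton'.mp hz
      rw [RingHom.mem_ker, ← hc, map_mul]
      have : red πb = 0 := by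
        rw [hπb, hfactor, Ideal.Quotient.eq_zero_iff_mem]
        exact Ideal.subset_span rfl
      rw [this, mul_zero]
  haveI : Nontrivial Rℓ := by
    refine Ideal.Quotient.nontrivial_iff.mpr ?_
    rw [Ne, Ideal.span_singleton_eq_top]
    intro hu
    exact hπ.not_isUnit ((isUnit_pow_iff (by omega : ℓ ≠ 0)).mp hu)
  set ft : Polynomial Rℓ := f.map mkℓ with hft
  have hftmonic : ft.Monic := hmonic.map mkℓ
  have hftred : ft.map red = f.map mk1 := by
    rw [hft, Polynomial.map_map]
    congr 1
  have hftirr : Irreducible (ft.map red) := by rw [hftred]; exact hfbar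
  have hftdeg : ft.natDegree = d := by rw [hft, hmonic.natDegree_map]; exact hd
  -- xℓ is a root of ft
  have hxℓroot : Polynomial.aeval xℓ ft = 0 := by
    have h1 := aeval_matrix_map mkℓ x f
    rw [hx] at h1
    have h2 : (0 : Matrix (Fin d) (Fin d) o).map mkℓ = 0 := Matrix.map_zero _ (map_zero mkℓ)
    rw [h2] at h1
    exact h1.symm
  -- the block scalar matrix X
  set X : Matrix (Fin m × Fin d) (Fin m × Fin d) Rℓ := blockScalar xℓ with hX
  have hXroot : Polynomial.aeval X ft = 0 := by
    rw [hX]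
    exact (Polynomial.aeval_algHom_apply
      (blockScalar : Matrix (Fin d) (Fin d) Rℓ →ₐ[Rℓ] Matrix (Fin m × Fin d) (Fin m × Fin d) Rℓ)
      xℓ ft).trans (by rw [hxℓroot, map_zero])
  -- lift a root of ft commuting with M
  have hcp : M.charpoly.map red = (ft.map red) ^ m := by
    rw [hftred, ← Matrix.charpoly_map, hcp0]
  obtain ⟨q, hYroot⟩ := exists_root_polynomial_in red hredsurj πb hker ℓ hπbnil
    ft hftmonic hftirr m M hcp
  set Y : Matrix (Fin m × Fin d) (Fin m × Fin d) Rℓ := Polynomial.aeval M q with hY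
  -- conjugate Y to X
  obtain ⟨G, G', hGG', hG'G, hGY⟩ := conj_of_two_roots red hredsurj πb hker ℓ hπbnil
    ft hftmonic hftirr Y X hYroot hXroot
  set g : (Matrix (Fin m × Fin d) (Fin m × Fin d) Rℓ)ˣ := ⟨G, G', hGG', hG'G⟩ with hg
  set B : Matrix (Fin m × Fin d) (Fin m × Fin d) Rℓ := G * M * G' with hB
  -- M commutes with Y
  have hMY : Commute M Y := by
    have h1 : Y ∈ Algebra.adjoin Rℓ {M} := by
      rw [Algebra.adjoin_singleton_eq_range_aeval]
      exact ⟨q, rfl⟩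
    exact Algebra.commute_of_mem_adjoin_singleton_of_commute h1 (Commute.refl M)
  have hG'X : G' * X = Y * G' := by
    calc G' * X = G' * X * (G * G') := by rw [hGG', mul_one]
      _ = G' * (X * G) * G' := by noncomm_ring
      _ = G' * (G * Y) * G' := by rw [hGY]
      _ = (G' * G) * Y * G' := by noncomm_ring
      _ = Y * G' := by rw [hG'G, one_mul]
  have hBX : B * X = X * B := by
    calc B * X = G * M * (G' * X) := by rw [hB]; noncomm_ring
      _ = G * M * (Y * G') := by rw [hG'X]
      _ = G * (M * Y) * G' := by noncomm_ring
      _ = G * (Y * M) * G' := by rw [hMY.eq]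
      _ = (G * Y) * M * G' := by noncomm_ring
      _ = (X * G) * M * G' := by rw [hGY]
      _ = X * B := by rw [hB]; noncomm_ring
  -- X is a polynomial in B
  have hXB : X = Polynomial.aeval B q := by
    set cj : Matrix (Fin m × Fin d) (Fin m × Fin d) Rℓ →+*
        Matrix (Fin m × Fin d) (Fin m × Fin d) Rℓ :=
      { toFun := fun z => G * z * G'
        map_one' := by show G * 1 * G' = 1; rw [mul_one, hGG']
        map_mul' := by
          intro z w
          calc G * (z * w) * G' = G * z * (G' * G) * w * G' := by rw [hG'G]; noncomm_ring
            _ = G * z * G' * (G * w * G') := by noncomm_ring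
        map_zero' := by simp
        map_add' := by intro z w; noncomm_ring } with hcj
    have hcjalg : ∀ r : Rℓ, cj (algebraMap Rℓ _ r) = algebraMap Rℓ _ r := by
      intro r
      show G * algebraMap Rℓ _ r * G' = algebraMap Rℓ _ r
      rw [← Algebra.commutes r G, mul_assoc, hGG', mul_one]
    have h1 := ringHom_aeval_commute (R := Rℓ) cj hcjalg M q
    have h2 : cj M = B := rfl
    have h3 : cj Y = X := by
      show G * Y * G' = X
      rw [hGY, mul_assoc, hGG', mul_one]
    rw [← h3, hY, h1, h2]
  -- block criterion
  have hcard : Nat.card (Fin d) = ft.natDegree := by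
    rw [Nat.card_eq_fintype_card, Fintype.card_fin, hftdeg]
  have hblocks : ∀ (y : Matrix (Fin m × Fin d) (Fin m × Fin d) Rℓ),
      y * X = X * y → ∀ i j, blkℓ y i j ∈ Algebra.adjoin Rℓ
        ({xℓ} : Set (Matrix (Fin d) (Fin d) Rℓ)) := by
    intro y hy i j
    have h1 := (commute_blockScalar_iff xℓ y).mp hy i j
    obtain ⟨q', hq'⟩ := commutant_of_root red hredsurj πb hker ℓ hπbnil
      ft hftmonic hftirr hcard xℓ hxℓroot _ h1
    rw [Algebra.adjoin_singleton_eq_range_aeval]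
    exact ⟨q', hq'.symm⟩
  refine ⟨g, B, ?_, ?_, ?_⟩
  · exact hblocks B hBX
  · rfl
  · intro y hy
    have h1 : Commute y B := by
      exact hy.symm
    have h2 : Commute y X := by
      rw [hXB]
      have h3 : Polynomial.aeval B q ∈ Algebra.adjoin Rℓ {B} := by
        rw [Algebra.adjoin_singleton_eq_range_aeval]
        exact ⟨q, rfl⟩
      exact Algebra.commute_of_mem_adjoin_singleton_of_commute h3 h1
    exact hblocks y h2.eq
end

section
/- Let G be a finite group with subgroups U, L, V such that L normalizes U and V and the multiplication map U × L × V → G is injective (a virtual Iwahori decomposition). Let e_U and e_V be the averaging idempotents of U and V in the complex group algebra CG. Then the map e_U e_V CG → e_V e_U CG given by f ↦ e_V f is an isomorphism of CL–CG bimodules. -/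
open scoped Classical

namespace Stmt15Aux

variable {G : Type*} [Group G] [Fintype G]

noncomputable def eI (H : Subgroup G) : MonoidAlgebra ℂ G :=
  (Nat.card H : ℂ)⁻¹ • ∑ g : G, if g ∈ H then MonoidAlgebra.of ℂ G g else 0

noncomputable def FH (H : Subgroup G) : Finset G :=
  Finset.univ.filter (fun g => g ∈ H)

lemma eI_eq (H : Subgroup G) :
    eI H = (Nat.card H : ℂ)⁻¹ • ∑ g ∈ FH H, MonoidAlgebra.of ℂ G g := by
  rw [eI, FH, Finset.sum_filter]

lemma card_FH (H : Subgroup G) : (FH H).card = Nat.card H := by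
  rw [Nat.card_eq_fintype_card, FH, Fintype.card_subtype]

lemma ncard_ne (H : Subgroup G) : (Nat.card H : ℂ) ≠ 0 := by
  exact_mod_cast Nat.card_pos.ne'

lemma eI_idem (H : Subgroup G) : eI H * eI H = eI H := by
  rw [eI_eq]
  rw [smul_mul_assoc, mul_smul_comm, Finset.sum_mul]
  have : ∀ g ∈ FH H, (MonoidAlgebra.of ℂ G g) * ∑ g' ∈ FH H, MonoidAlgebra.of ℂ G g'
      = ∑ g' ∈ FH H, MonoidAlgebra.of ℂ G g' := by
    intro g hg
    rw [Finset.mul_sum]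
    refine Finset.sum_nbij' (fun x => g * x) (fun x => g⁻¹ * x) ?_ ?_ ?_ ?_ ?_
    · intro a ha
      simp only [FH, Finset.mem_filter, Finset.mem_univ, true_and] at *
      exact H.mul_mem hg ha
    · intro a ha
      simp only [FH, Finset.mem_filter, Finset.mem_univ, true_and] at *
      exact H.mul_mem (H.inv_mem hg) ha
    · intro a _; group
    · intro a _; group
    · intro a _; rw [← map_mul]
  rw [Finset.sum_congr rfl this, Finset.sum_const, card_FH, smul_smul]
  rw [← Nat.cast_smul_eq_nsmul ℂ, smul_smul, mul_assoc, inv_mul_cancel₀ (ncard_ne H), mul_one]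

noncomputable def inn (f g : MonoidAlgebra ℂ G) : ℂ :=
  ∑ x : G, (starRingEnd ℂ) (f.coeff x) * g.coeff x

lemma inn_self_eq_zero {f : MonoidAlgebra ℂ G} (h : inn f f = 0) : f = 0 := by
  have h2 : ∑ x : G, ((Complex.normSq (f.coeff x) : ℝ) : ℂ) = 0 := by
    rw [← h, inn]
    refine Finset.sum_congr rfl fun x _ => ?_
    rw [mul_comm, Complex.mul_conj]
  rw [← Complex.ofReal_sum, Complex.ofReal_eq_zero] at h2
  have h3 := (Finset.sum_eq_zero_iff_of_nonneg
    (fun x _ => Complex.normSq_nonneg (f.coeff x))).1 h2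
  ext x
  exact Complex.normSq_eq_zero.1 (h3 x (Finset.mem_univ x))

lemma inn_smul_right (c : ℂ) (f g : MonoidAlgebra ℂ G) :
    inn f (c • g) = c * inn f g := by
  rw [inn, inn, Finset.mul_sum]
  refine Finset.sum_congr rfl fun x _ => ?_
  rw [MonoidAlgebra.coeff_smul, Finsupp.smul_apply, smul_eq_mul]; ring

lemma inn_smul_left (c : ℂ) (f g : MonoidAlgebra ℂ G) :
    inn (c • f) g = (starRingEnd ℂ) c * inn f g := by
  rw [inn, inn, Finset.mul_sum]
  refine Finset.sum_congr rfl fun x _ => ?_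
  rw [MonoidAlgebra.coeff_smul, Finsupp.smul_apply, smul_eq_mul, map_mul]; ring

lemma inn_sum_right {ι : Type*} (s : Finset ι) (f : MonoidAlgebra ℂ G)
    (g : ι → MonoidAlgebra ℂ G) :
    inn f (∑ i ∈ s, g i) = ∑ i ∈ s, inn f (g i) := by
  rw [inn]
  refine (Finset.sum_congr rfl fun x _ => ?_).trans Finset.sum_comm
  rw [MonoidAlgebra.coeff_sum, Finset.sum_apply', Finset.mul_sum]

lemma inn_sum_left {ι : Type*} (s : Finset ι) (f : ι → MonoidAlgebra ℂ G)
    (g : MonoidAlgebra ℂ G) :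
    inn (∑ i ∈ s, f i) g = ∑ i ∈ s, inn (f i) g := by
  rw [inn]
  refine (Finset.sum_congr rfl fun x _ => ?_).trans Finset.sum_comm
  rw [MonoidAlgebra.coeff_sum, Finset.sum_apply', map_sum, Finset.sum_mul]

lemma inn_of_mul (h : G) (f g : MonoidAlgebra ℂ G) :
    inn (MonoidAlgebra.of ℂ G h * f) g = inn f (MonoidAlgebra.of ℂ G h⁻¹ * g) := by
  rw [inn, inn]
  refine Fintype.sum_equiv (Equiv.mulLeft h⁻¹) _ _ fun y => ?_
  simp only [MonoidAlgebra.of_apply, MonoidAlgebra.coeff_single_mul_apply, one_mul,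
    Equiv.coe_mulLeft, inv_inv]
  rw [mul_inv_cancel_left]

lemma eI_mul (H : Subgroup G) (f : MonoidAlgebra ℂ G) :
    eI H * f = (Nat.card H : ℂ)⁻¹ • ∑ h ∈ FH H, MonoidAlgebra.of ℂ G h * f := by
  rw [eI_eq, smul_mul_assoc, Finset.sum_mul]

lemma inn_eI_mul (H : Subgroup G) (f g : MonoidAlgebra ℂ G) :
    inn (eI H * f) g = inn f (eI H * g) := by
  rw [eI_mul, eI_mul, inn_smul_left, inn_smul_right, inn_sum_left, inn_sum_right]
  have hc : (starRingEnd ℂ) ((Nat.card H : ℂ)⁻¹) = (Nat.card H : ℂ)⁻¹ := by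
    rw [map_inv₀, Complex.conj_natCast]
  rw [hc]
  congr 1
  rw [Finset.sum_congr rfl (fun h _ => inn_of_mul h f g)]
  refine Finset.sum_nbij' (fun x => x⁻¹) (fun x => x⁻¹) ?_ ?_ ?_ ?_ ?_ <;>
    intro a ha <;>
    simp only [FH, Finset.mem_filter, Finset.mem_univ, true_and, inv_inv] at *
  · exact H.inv_mem ha
  · exact H.inv_mem ha

lemma inn_zero_right (f : MonoidAlgebra ℂ G) : inn f 0 = 0 := by
  simp [inn]

lemma inj0 (X Y : Subgroup G) (a : MonoidAlgebra ℂ G)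
    (h : eI X * (eI Y * eI X * a) = 0) : eI Y * eI X * a = 0 := by
  set z := eI Y * eI X * a with hz
  have h1 : eI Y * z = z := by rw [hz, ← mul_assoc, ← mul_assoc, eI_idem]
  apply inn_self_eq_zero
  calc inn z z = inn (eI Y * (eI X * a)) z := by rw [← mul_assoc]
    _ = inn (eI X * a) (eI Y * z) := by rw [inn_eI_mul]
    _ = inn (eI X * a) z := by rw [h1]
    _ = inn a (eI X * z) := by rw [inn_eI_mul]
    _ = 0 := by rw [h, inn_zero_right]

lemma of_mul_eI (Hn : Subgroup G) {l : G} (hl : ∀ v ∈ Hn, l * v * l⁻¹ ∈ Hn)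
    (hl' : ∀ v ∈ Hn, l⁻¹ * v * l ∈ Hn) :
    MonoidAlgebra.of ℂ G l * eI Hn = eI Hn * MonoidAlgebra.of ℂ G l := by
  rw [eI_eq, mul_smul_comm, smul_mul_assoc, Finset.mul_sum, Finset.sum_mul]
  congr 1
  refine Finset.sum_nbij' (fun g => l * g * l⁻¹) (fun g => l⁻¹ * g * l) ?_ ?_ ?_ ?_ ?_ <;>
    intro a ha <;>
    simp only [FH, Finset.mem_filter, Finset.mem_univ, true_and] at *
  · exact hl a ha
  · exact hl' a ha
  · group
  · group
  · rw [← map_mul, ← map_mul]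
    congr 1
    group

noncomputable instance : FiniteDimensional ℂ (MonoidAlgebra ℂ G) :=
  Module.Finite.equiv ((Finsupp.linearEquivFunOnFinite ℂ ℂ G).symm.trans (MonoidAlgebra.coeffLinearEquiv ℂ).symm)

open LinearMap in
lemma map_finrank (X Y : Subgroup G) :
    Module.finrank ℂ (LinearMap.range (mulLeft ℂ (eI X * (eI Y * eI X)))) =
      Module.finrank ℂ (LinearMap.range (mulLeft ℂ (eI Y * eI X : MonoidAlgebra ℂ G))) := by
  set M := LinearMap.range (mulLeft ℂ (eI Y * eI X : MonoidAlgebra ℂ G)) with hM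
  have hmap : LinearMap.range (mulLeft ℂ (eI X * (eI Y * eI X))) =
      M.map (mulLeft ℂ (eI X)) := by
    rw [mulLeft_mul, range_comp]
  rw [hmap, ← range_domRestrict]
  have hker : ker ((mulLeft ℂ (eI X : MonoidAlgebra ℂ G)).domRestrict M) = ⊥ := by
    rw [eq_bot_iff]
    rintro ⟨x, hx⟩ hx0
    simp only [mem_ker, domRestrict_apply, mulLeft_apply] at hx0
    obtain ⟨a, ha⟩ := hx
    simp only [mulLeft_apply] at ha
    rw [Submodule.mem_bot]
    refine Subtype.ext ?_
    show x = 0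
    rw [← ha]
    refine inj0 X Y a ?_
    rw [ha, hx0]
  have h2 := finrank_range_add_finrank_ker ((mulLeft ℂ (eI X : MonoidAlgebra ℂ G)).domRestrict M)
  rw [hker, finrank_bot, add_zero] at h2
  exact h2

open LinearMap in
lemma range_eq (X Y : Subgroup G) :
    LinearMap.range (mulLeft ℂ (eI X * eI Y * eI X)) =
      LinearMap.range (mulLeft ℂ (eI X * eI Y : MonoidAlgebra ℂ G)) := by
  have le1 : LinearMap.range (mulLeft ℂ (eI X * eI Y * eI X)) ≤
      LinearMap.range (mulLeft ℂ (eI X * eI Y : MonoidAlgebra ℂ G)) := by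
    rintro w ⟨a, rfl⟩
    exact ⟨eI X * a, by simp only [mulLeft_apply]; rw [mul_assoc (eI X * eI Y)]⟩
  have le2 : LinearMap.range (mulLeft ℂ (eI Y * eI X * eI Y)) ≤
      LinearMap.range (mulLeft ℂ (eI Y * eI X : MonoidAlgebra ℂ G)) := by
    rintro w ⟨a, rfl⟩
    exact ⟨eI Y * a, by simp only [mulLeft_apply]; rw [mul_assoc (eI Y * eI X)]⟩
  have e1 := map_finrank X Y
  have e2 := map_finrank Y X
  rw [← mul_assoc] at e1 e2
  -- e1 : finrank (range (eX*eY*eX)) = finrank (range (eY*eX))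
  -- e2 : finrank (range (eY*eX*eY)) = finrank (range (eX*eY))
  have hle1 := Submodule.finrank_mono le1
  have hle2 := Submodule.finrank_mono le2
  refine (Submodule.eq_of_le_of_finrank_le le1 ?_)
  omega


end Stmt15Aux

open Stmt15Aux in
open scoped Classical in
/-- Let `G` be a finite group with a virtual Iwahori decomposition `(U, L, V)`
(`L` normalizes `U` and `V`, and multiplication `U × L × V → G` is injective).
With `e_U`, `e_V` the averaging idempotents in `ℂ[G]`, the map
`e_U e_V ℂ[G] → e_V e_U ℂ[G]`, `z ↦ e_V * z`, is an isomorphism of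
`ℂ[L]`–`ℂ[G]` bimodules. -/
theorem stmt15 (G : Type*) [Group G] [Fintype G] (U L V : Subgroup G)
    (hLU : ∀ l ∈ L, ∀ u ∈ U, l * u * l⁻¹ ∈ U)
    (hLV : ∀ l ∈ L, ∀ v ∈ V, l * v * l⁻¹ ∈ V)
    (hinj : Function.Injective
      (fun p : U × L × V => (p.1 : G) * (p.2.1 : G) * (p.2.2 : G))) :
    let A := MonoidAlgebra ℂ G
    let e : Subgroup G → A := fun H =>
      (Nat.card H : ℂ)⁻¹ • ∑ g : G, if g ∈ H then MonoidAlgebra.of ℂ G g else 0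
    let S1 : Set A := {z | ∃ a : A, z = e U * e V * a}
    let S2 : Set A := {z | ∃ a : A, z = e V * e U * a}
    let φ : A → A := fun z => e V * z
    Set.BijOn φ S1 S2 ∧
      (∀ z ∈ S1, ∀ z' ∈ S1, φ (z + z') = φ z + φ z') ∧
      (∀ z ∈ S1, ∀ c : ℂ, φ (c • z) = c • φ z) ∧
      (∀ z ∈ S1, ∀ l ∈ L, φ (MonoidAlgebra.of ℂ G l * z) =
        MonoidAlgebra.of ℂ G l * φ z) ∧
      (∀ z ∈ S1, ∀ a : A, φ (z * a) = φ z * a) := by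
  intro A e S1 S2 φ
  have he : ∀ H : Subgroup G, e H = eI H := fun _ => rfl
  refine ⟨⟨?_, ?_, ?_⟩, ?_, ?_, ?_, ?_⟩
  · -- MapsTo
    rintro z ⟨a, rfl⟩
    exact ⟨e V * a, by show e V * _ = _; simp only [mul_assoc]⟩
  · -- InjOn
    rintro z ⟨a, rfl⟩ z' ⟨a', rfl⟩ hzz'
    simp only [he]
    simp only [φ, he] at hzz'
    rw [← sub_eq_zero, ← mul_sub]
    have h0 : eI V * (eI U * eI V * (a - a')) = 0 := by
      rw [mul_sub, mul_sub, sub_eq_zero]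
      exact hzz'
    exact inj0 V U (a - a') h0
  · -- SurjOn
    rintro w ⟨b, rfl⟩
    have hw : e V * e U * b ∈ LinearMap.range
        (LinearMap.mulLeft ℂ (eI V * eI U : MonoidAlgebra ℂ G)) :=
      ⟨b, by simp only [LinearMap.mulLeft_apply, he]⟩
    rw [← range_eq V U] at hw
    obtain ⟨a, ha⟩ := hw
    simp only [LinearMap.mulLeft_apply] at ha
    refine ⟨eI U * eI V * a, ⟨a, by simp only [he]⟩, ?_⟩
    show e V * _ = _
    rw [← ha]
    simp only [he, mul_assoc]
  · -- additive
    intro z _ z' _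
    show e V * (z + z') = e V * z + e V * z'
    rw [mul_add]
  · -- smul
    intro z _ c
    show e V * (c • z) = c • (e V * z)
    rw [mul_smul_comm]
  · -- L-equivariance
    intro z _ l hl
    show e V * (MonoidAlgebra.of ℂ G l * z) = MonoidAlgebra.of ℂ G l * (e V * z)
    have hc := of_mul_eI V (fun v hv => hLV l hl v hv)
      (fun v hv => by
        have := hLV l⁻¹ (L.inv_mem hl) v hv
        rwa [inv_inv] at this)
    rw [he, ← mul_assoc, ← hc, mul_assoc]
  · -- right A-module
    intro z _ a
    show e V * (z * a) = e V * z * a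
    rw [mul_assoc]
end

section
/- Let G be a finite group with subgroups L, V′ ⊆ V, U′ ⊆ U such that (U, L, V) is a virtual Iwahori decomposition and L normalizes U′. Let Y be an irreducible complex representation of G. Assume: (1) L′ := [V′,U] ⊆ L acts on Y by a linear character ψ; (2) V′ and U centralize L′; (3) U′ = ∩_{v∈V′} Ker(ψ_v), where ψ_v(u) = ψ(uvu^{-1}v^{-1}); (4) U is abelian and the map V′ → (U/U′)^∨, v ↦ ψ_v, is surjective. Then e_V e_U Y = e_V e_{U′} Y as subspaces of Y. -/
open scoped Classical in
/-- The idempotent-reduction lemma: under hypotheses (1)–(4) on the virtual Iwahori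
decomposition `(U, L, V)`, subgroups `V′ ≤ V`, `U′ ≤ U`, the subgroup
`L′ = [V′, U] ≤ L` acting by a linear character `ψ` on the irreducible
representation `Y`, one has `e_V e_U Y = e_V e_{U′} Y`. -/
theorem stmt16 (G W : Type*) [Group G] [Fintype G]
    [AddCommGroup W] [Module ℂ W] [Nontrivial W]
    (ρ : Representation ℂ G W)
    (hirr : ∀ p : Submodule ℂ W, (∀ g : G, ∀ w ∈ p, ρ g w ∈ p) → p = ⊥ ∨ p = ⊤)
    (U L V V' U' L' : Subgroup G)
    (hV'V : V' ≤ V) (hU'U : U' ≤ U)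
    (hLU : ∀ l ∈ L, ∀ u ∈ U, l * u * l⁻¹ ∈ U)
    (hLV : ∀ l ∈ L, ∀ v ∈ V, l * v * l⁻¹ ∈ V)
    (hLU' : ∀ l ∈ L, ∀ u ∈ U', l * u * l⁻¹ ∈ U')
    (hinj : Function.Injective
      (fun p : U × L × V => (p.1 : G) * (p.2.1 : G) * (p.2.2 : G)))
    (hL'def : L' = ⁅V', U⁆) (hL'L : L' ≤ L)
    (ψ : G → ℂ)
    (hψmul : ∀ a ∈ L', ∀ b ∈ L', ψ (a * b) = ψ a * ψ b)
    -- (1) `L′` acts on `Y` by the linear character `ψ`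
    (hact : ∀ h ∈ L', ∀ w : W, ρ h w = ψ h • w)
    -- (2) `V′` and `U` centralize `L′`
    (hcentV : ∀ v ∈ V', ∀ h ∈ L', v * h = h * v)
    (hcentU : ∀ u ∈ U, ∀ h ∈ L', u * h = h * u)
    -- (3) `U′ = ∩_{v ∈ V′} Ker ψ_v` where `ψ_v(u) = ψ([u, v])`
    (hU'ker : ∀ u : G, u ∈ U' ↔ u ∈ U ∧ ∀ v ∈ V', ψ (u * v * u⁻¹ * v⁻¹) = 1)
    -- (4) `U` is abelian and `v ↦ ψ_v` surjects onto the character group of `U/U′`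
    (hUab : ∀ a ∈ U, ∀ b ∈ U, a * b = b * a)
    (hsurj : ∀ χ : G → ℂ, (∀ a ∈ U, ∀ b ∈ U, χ (a * b) = χ a * χ b) →
      (∀ u ∈ U', χ u = 1) → (∀ u ∈ U, χ u ≠ 0) →
      ∃ v ∈ V', ∀ u ∈ U, χ u = ψ (u * v * u⁻¹ * v⁻¹)) :
    let e : Subgroup G → (W →ₗ[ℂ] W) := fun H =>
      (Nat.card H : ℂ)⁻¹ • ∑ g : G, if g ∈ H then (ρ g : W →ₗ[ℂ] W) else 0
    LinearMap.range (e V ∘ₗ e U) = LinearMap.range (e V ∘ₗ e U') := by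
  intro e
  classical
  let S : Subgroup G → (W →ₗ[ℂ] W) := fun H =>
    ∑ g : G, if g ∈ H then (ρ g : W →ₗ[ℂ] W) else 0
  have heS : ∀ H : Subgroup G, e H = (Nat.card H : ℂ)⁻¹ • S H := fun _ => rfl
  have hSapp : ∀ (H : Subgroup G) (w : W),
      S H w = ∑ g : G, if g ∈ H then ρ g w else 0 := by
    intro H w
    show (∑ g : G, if g ∈ H then (ρ g : W →ₗ[ℂ] W) else 0) w = _
    simp [LinearMap.sum_apply, apply_ite (fun f : W →ₗ[ℂ] W => f w)]
  have hcard : ∀ H : Subgroup G, (Nat.card H : ℂ) ≠ 0 := by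
    intro H
    exact Nat.cast_ne_zero.mpr (Nat.card_pos (α := H)).ne'
  -- ψ 1 = 1
  have hψone : ψ 1 = 1 := by
    obtain ⟨w, hw⟩ := exists_ne (0 : W)
    have h := hact 1 (one_mem L') w
    rw [map_one] at h
    have h2 : (ψ 1 - 1) • w = 0 := by
      rw [sub_smul, one_smul, ← h]
      simp
    rcases smul_eq_zero.mp h2 with h' | h'
    · exact sub_eq_zero.mp h'
    · exact absurd h' hw
  -- commutator memberships
  have hmemL' : ∀ v ∈ V', ∀ u ∈ U, v * u * v⁻¹ * u⁻¹ ∈ L' := by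
    intro v hv u hu
    rw [hL'def]
    have h := Subgroup.commutator_mem_commutator hv hu
    rwa [commutatorElement_def] at h
  have hinvpair : ∀ v ∈ V', ∀ u ∈ U,
      ψ (u * v * u⁻¹ * v⁻¹) * ψ (v * u * v⁻¹ * u⁻¹) = 1 := by
    intro v hv u hu
    have hm1 : u * v * u⁻¹ * v⁻¹ ∈ L' := by
      have h := hmemL' v hv u hu
      have h2 := inv_mem h
      have h3 : (v * u * v⁻¹ * u⁻¹)⁻¹ = u * v * u⁻¹ * v⁻¹ := by group
      rwa [h3] at h2
    rw [← hψmul _ hm1 _ (hmemL' v hv u hu)]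
    have h4 : (u * v * u⁻¹ * v⁻¹) * (v * u * v⁻¹ * u⁻¹) = 1 := by group
    rw [h4, hψone]
  -- multiplicativity of v ↦ ψ([v,u]) on V'
  have hχmul : ∀ u ∈ U, ∀ a ∈ V', ∀ b ∈ V',
      ψ (a * b * u * (a * b)⁻¹ * u⁻¹) = ψ (a * u * a⁻¹ * u⁻¹) * ψ (b * u * b⁻¹ * u⁻¹) := by
    intro u hu a ha b hb
    have hc : a * (b * u * b⁻¹ * u⁻¹) = (b * u * b⁻¹ * u⁻¹) * a :=
      hcentV a ha _ (hmemL' b hb u hu)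
    have key : a * b * u * (a * b)⁻¹ * u⁻¹
        = (b * u * b⁻¹ * u⁻¹) * (a * u * a⁻¹ * u⁻¹) := by
      calc a * b * u * (a * b)⁻¹ * u⁻¹
          = a * (b * u * b⁻¹ * u⁻¹) * (u * a⁻¹ * u⁻¹) := by group
        _ = (b * u * b⁻¹ * u⁻¹) * a * (u * a⁻¹ * u⁻¹) := by rw [hc]
        _ = (b * u * b⁻¹ * u⁻¹) * (a * u * a⁻¹ * u⁻¹) := by group
    rw [key, hψmul _ (hmemL' b hb u hu) _ (hmemL' a ha u hu), mul_comm]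
  -- character sum
  have hchar : ∀ u, u ∈ U → (∑ v : G, if v ∈ V' then ψ (v * u * v⁻¹ * u⁻¹) else 0)
      = if u ∈ U' then ((Nat.card V' : ℂ)) else 0 := by
    intro u hu
    by_cases hu' : u ∈ U'
    · rw [if_pos hu']
      have hone : ∀ v ∈ V', ψ (v * u * v⁻¹ * u⁻¹) = 1 := by
        intro v hv
        have h2 := ((hU'ker u).mp hu').2 v hv
        have h3 := hinvpair v hv u hu
        rwa [h2, one_mul] at h3
      calc (∑ v : G, if v ∈ V' then ψ (v * u * v⁻¹ * u⁻¹) else 0)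
          = ∑ v : G, if v ∈ V' then (1 : ℂ) else 0 := by
            apply Finset.sum_congr rfl
            intro v _
            by_cases hv : v ∈ V' <;> simp [hv, hone]
        _ = (Nat.card V' : ℂ) := by
            rw [Finset.sum_boole, Nat.card_eq_fintype_card, Fintype.card_subtype]
    · rw [if_neg hu']
      have hex : ∃ v, v ∈ V' ∧ ψ (u * v * u⁻¹ * v⁻¹) ≠ 1 := by
        by_contra hcon
        push_neg at hcon
        exact hu' ((hU'ker u).mpr ⟨hu, fun v hv => hcon v hv⟩)
      obtain ⟨v₀, hv₀, hne⟩ := hex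
      have hχ0 : ψ (v₀ * u * v₀⁻¹ * u⁻¹) ≠ 1 := by
        intro h
        apply hne
        have h2 := hinvpair v₀ hv₀ u hu
        rwa [h, mul_one] at h2
      set c : ℂ := ∑ v : G, if v ∈ V' then ψ (v * u * v⁻¹ * u⁻¹) else 0 with hc
      have hstep : ψ (v₀ * u * v₀⁻¹ * u⁻¹) * c = c := by
        rw [hc, Finset.mul_sum]
        rw [← Equiv.sum_comp (Equiv.mulLeft v₀)
          (fun v => if v ∈ V' then ψ (v * u * v⁻¹ * u⁻¹) else 0)]
        apply Finset.sum_congr rfl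
        intro v _
        by_cases hv : v ∈ V'
        · simp only [Equiv.coe_mulLeft, mul_mem_cancel_left hv₀, hv, if_true, mul_ite, mul_zero]
          exact (hχmul u hu v₀ hv₀ v hv).symm
        · simp [hv, Equiv.coe_mulLeft, mul_mem_cancel_left hv₀]
      have hz : (ψ (v₀ * u * v₀⁻¹ * u⁻¹) - 1) * c = 0 := by
        rw [sub_mul, one_mul, hstep, sub_self]
      rcases mul_eq_zero.mp hz with h' | h'
      · exact absurd (sub_eq_zero.mp h') hχ0
      · exact h'
  -- left absorption
  have h1 : ∀ (H : Subgroup G) (a : G), a ∈ H → ∀ w : W, ρ a (S H w) = S H w := by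
    intro H a ha w
    rw [hSapp, map_sum]
    rw [← Equiv.sum_comp (Equiv.mulLeft a) (fun g => if g ∈ H then ρ g w else 0)]
    apply Finset.sum_congr rfl
    intro g _
    by_cases hg : g ∈ H
    · simp [hg, Equiv.coe_mulLeft, mul_mem_cancel_left ha, map_mul, Module.End.mul_apply]
    · simp [hg, Equiv.coe_mulLeft, mul_mem_cancel_left ha]
  -- right absorption
  have h2 : ∀ (H : Subgroup G) (a : G), a ∈ H → ∀ w : W, S H (ρ a w) = S H w := by
    intro H a ha w
    rw [hSapp, hSapp]
    rw [← Equiv.sum_comp (Equiv.mulRight a) (fun g => if g ∈ H then ρ g w else 0)]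
    apply Finset.sum_congr rfl
    intro g _
    by_cases hg : g ∈ H
    · simp [hg, Equiv.coe_mulRight, mul_mem_cancel_right ha, map_mul, Module.End.mul_apply]
    · simp [hg, Equiv.coe_mulRight, mul_mem_cancel_right ha]
  -- absorption of e_U' into e_U
  have h3 : ∀ w : W, S U' (S U w) = (Nat.card U' : ℂ) • S U w := by
    intro w
    rw [hSapp U']
    calc (∑ g : G, if g ∈ U' then ρ g (S U w) else 0)
        = ∑ g : G, if g ∈ U' then S U w else 0 := by
          apply Finset.sum_congr rfl
          intro g _
          by_cases hg : g ∈ U'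
          · simp [hg, h1 U g (hU'U hg) w]
          · simp [hg]
      _ = (Nat.card U' : ℂ) • S U w := by
          rw [← Finset.sum_filter, Finset.sum_const]
          rw [Nat.card_eq_fintype_card, Fintype.card_subtype]
          rw [Nat.cast_smul_eq_nsmul (R := ℂ)]
  -- the key identity
  have h4 : ∀ w : W, (∑ v : G, if v ∈ V' then ρ v (S U (ρ v⁻¹ w)) else 0)
      = (Nat.card V' : ℂ) • S U' w := by
    intro w
    have step1 : ∀ v ∈ V', ρ v (S U (ρ v⁻¹ w))
        = ∑ u : G, if u ∈ U then ψ (v * u * v⁻¹ * u⁻¹) • ρ u w else 0 := by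
      intro v hv
      rw [hSapp U, map_sum]
      apply Finset.sum_congr rfl
      intro u _
      by_cases hu : u ∈ U
      · simp only [hu, if_true]
        have hrw : ρ v (ρ u (ρ v⁻¹ w)) = ρ (v * u * v⁻¹) w := by
          rw [map_mul, map_mul, Module.End.mul_apply, Module.End.mul_apply]
        rw [hrw]
        have hdec : (v * u * v⁻¹ : G) = (v * u * v⁻¹ * u⁻¹) * u := by group
        conv_lhs => rw [hdec]
        rw [map_mul, Module.End.mul_apply, hact _ (hmemL' v hv u hu)]
      · simp [hu]
    calc (∑ v : G, if v ∈ V' then ρ v (S U (ρ v⁻¹ w)) else 0)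
        = ∑ v : G, ∑ u : G,
            (if v ∈ V' then (if u ∈ U then ψ (v * u * v⁻¹ * u⁻¹) • ρ u w else 0) else 0) := by
          apply Finset.sum_congr rfl
          intro v _
          by_cases hv : v ∈ V'
          · simp only [hv, if_true]
            rw [step1 v hv]
          · simp [hv]
      _ = ∑ u : G, ∑ v : G,
            (if v ∈ V' then (if u ∈ U then ψ (v * u * v⁻¹ * u⁻¹) • ρ u w else 0) else 0) :=
          Finset.sum_comm
      _ = ∑ u : G, (if u ∈ U then
            (if u ∈ U' then (Nat.card V' : ℂ) else 0) • ρ u w else 0) := by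
          apply Finset.sum_congr rfl
          intro u _
          by_cases hu : u ∈ U
          · simp only [hu, if_true]
            rw [← hchar u hu, Finset.sum_smul]
            apply Finset.sum_congr rfl
            intro v _
            by_cases hv : v ∈ V' <;> simp [hv]
          · simp [hu]
      _ = (Nat.card V' : ℂ) • S U' w := by
          rw [hSapp U', Finset.smul_sum]
          apply Finset.sum_congr rfl
          intro u _
          by_cases hu' : u ∈ U'
          · simp [hu', hU'U hu']
          · by_cases hu : u ∈ U <;> simp [hu, hu']
  -- assemble
  apply le_antisymm
  · rintro y ⟨x, rfl⟩
    refine ⟨(Nat.card U : ℂ)⁻¹ • S U x, ?_⟩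
    simp only [LinearMap.comp_apply, heS, LinearMap.smul_apply, map_smul, smul_smul]
    rw [h3 x, map_smul, smul_smul]
    congr 1
    field_simp
  · rintro y ⟨x, rfl⟩
    refine ⟨((Nat.card U : ℂ) * (Nat.card U' : ℂ)⁻¹ * (Nat.card V' : ℂ)⁻¹) •
      ∑ v : G, if v ∈ V' then ρ v⁻¹ x else 0, ?_⟩
    have key : S V (S U (∑ v : G, if v ∈ V' then ρ v⁻¹ x else 0))
        = (Nat.card V' : ℂ) • S V (S U' x) := by
      rw [map_sum, map_sum]
      have hterm : ∀ v : G, S V (S U (if v ∈ V' then ρ v⁻¹ x else 0))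
          = S V (if v ∈ V' then ρ v (S U (ρ v⁻¹ x)) else 0) := by
        intro v
        by_cases hv : v ∈ V'
        · simp only [hv, if_true]
          rw [h2 V v (hV'V hv)]
        · simp [hv]
      rw [Finset.sum_congr rfl (fun v _ => hterm v), ← map_sum, h4 x, map_smul]
    simp only [LinearMap.comp_apply, heS, LinearMap.smul_apply, map_smul, smul_smul]
    rw [key, smul_smul]
    congr 1
    field_simp
end

section
/- Let N be a finite abelian group and β a 2-cocycle on N with values in C^× such that the twisted group algebra C^β N is a central simple algebra (β nondegenerate). Suppose N = N_E × N_O and the alternating form ⟨h1,h2⟩_β = β(h1,h2)/β(h2,h1) is trivial on N_E × N_O. Then the multiplication map C^β N_E ⊗ C^β N_O → C^β N is an isomorphism of algebras. -/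
/-- Let `N = N_E × N_O` be a finite abelian group with a nondegenerate 2-cocycle `β`
valued in `ℂˣ`, such that the alternating form `⟨h₁,h₂⟩_β = β(h₁,h₂)/β(h₂,h₁)` is
trivial on `N_E × N_O`.  Then the multiplication map
`ℂ^β N_E ⊗ ℂ^β N_O → ℂ^β N` is an isomorphism of algebras.  Identifying
`ℂ^β N_E ⊗ ℂ^β N_O` with functions on `N` (basis `T_{h_E} ⊗ T_{h_O}`), this map is
`Ψ(c)(h) = β((h₁,1),(1,h₂)) · c(h)`, and the claim is that `Ψ` is a linear bijection
carrying the tensor-product multiplication to the twisted multiplication of `ℂ^β N`. -/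
theorem stmt17 (NE NO : Type*) [CommGroup NE] [CommGroup NO]
    [Fintype NE] [Fintype NO]
    (β : (NE × NO) → (NE × NO) → ℂˣ)
    (hcocycle : ∀ g h k : NE × NO,
      (β g h : ℂ) * β (g * h) k = (β h k : ℂ) * β g (h * k))
    (hnondeg : ∀ h : NE × NO, (∀ h' : NE × NO, β h h' = β h' h) → h = 1)
    (htriv : ∀ (hE : NE) (hO : NO),
      β (hE, (1 : NO)) ((1 : NE), hO) = β ((1 : NE), hO) (hE, (1 : NO))) :
    let tmul : ((NE × NO) → ℂ) → ((NE × NO) → ℂ) → ((NE × NO) → ℂ) :=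
      fun a b n => ∑ h : NE × NO, (β h (h⁻¹ * n) : ℂ) * a h * b (h⁻¹ * n)
    let tensorMul : ((NE × NO) → ℂ) → ((NE × NO) → ℂ) → ((NE × NO) → ℂ) :=
      fun a b n => ∑ h : NE × NO,
        (β (h.1, (1 : NO)) ((h.1⁻¹ * n.1), (1 : NO)) : ℂ) *
          (β ((1 : NE), h.2) ((1 : NE), (h.2⁻¹ * n.2)) : ℂ) *
          a h * b (h⁻¹ * n)
    let Ψ : ((NE × NO) → ℂ) → ((NE × NO) → ℂ) :=
      fun c n => (β (n.1, (1 : NO)) ((1 : NE), n.2) : ℂ) * c n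
    IsLinearMap ℂ Ψ ∧ Function.Bijective Ψ ∧
      ∀ a b, Ψ (tensorMul a b) = tmul (Ψ a) (Ψ b) := by

  intro tmul tensorMul Ψ
  have key : ∀ (h k : NE × NO),
      (β ((h * k).1, (1 : NO)) ((1 : NE), (h * k).2) : ℂ) *
        β (h.1, (1 : NO)) (k.1, (1 : NO)) * β ((1 : NE), h.2) ((1 : NE), k.2)
      = (β h k : ℂ) * β (h.1, (1 : NO)) ((1 : NE), h.2) *
        β (k.1, (1 : NO)) ((1 : NE), k.2) := by
    rintro ⟨h1, h2⟩ ⟨k1, k2⟩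
    have r1 := hcocycle (h1, 1) (1, h2) (k1, 1)
    have r2 := hcocycle (h1, 1) (k1, 1) (1, h2)
    have r3 := hcocycle ((h1, 1) * (k1, 1)) (1, h2) (1, k2)
    have r4 := hcocycle ((h1, 1) * (1, h2)) (k1, 1) (1, k2)
    have r5 : (β ((k1, 1) : NE × NO) (1, h2) : ℂ) = β (1, h2) (k1, 1) := by
      rw [htriv]
    simp only [Prod.mk_mul_mk, mul_one, one_mul] at r1 r2 r3 r4 r5 ⊢
    linear_combination (-(β ((h1, 1) : NE × NO) (k1, 1) : ℂ)) * r3 +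
      (β ((h1 * k1, h2) : NE × NO) (1, k2) : ℂ) * r2 +
      (β ((h1, 1) : NE × NO) (k1, h2) : ℂ) *
        (β ((h1 * k1, h2) : NE × NO) (1, k2) : ℂ) * r5 -
      (β ((h1 * k1, h2) : NE × NO) (1, k2) : ℂ) * r1 +
      (β ((h1, 1) : NE × NO) (1, h2) : ℂ) * r4
  refine ⟨⟨?_, ?_⟩, ?_, ?_⟩
  · intro x y; funext n; simp [Ψ, mul_add]
  · intro c x; funext n; simp [Ψ, smul_eq_mul]; ring
  · refine Function.bijective_iff_has_inverse.2
      ⟨fun c n => ((β (n.1, (1 : NO)) ((1 : NE), n.2))⁻¹ : ℂˣ) * c n, ?_, ?_⟩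
    · intro c; funext n; simp [Ψ]
    · intro c; funext n; simp [Ψ]
  · intro a b
    funext n
    show (β (n.1, (1 : NO)) ((1 : NE), n.2) : ℂ) * (∑ h : NE × NO, _) = _
    rw [Finset.mul_sum]
    refine Finset.sum_congr rfl fun h _ => ?_
    have hk := key h (h⁻¹ * n)
    rw [mul_inv_cancel_left] at hk
    simp only [Prod.fst_mul, Prod.fst_inv, Prod.snd_mul, Prod.snd_inv] at hk
    linear_combination (a h * b (h⁻¹ * n)) * hk
end

section
/- Let N be a finite abelian group and β a 2-cocycle on N with values in C^×. Then the center of the twisted group algebra C^β N is spanned by the elements T_h for h in the radical of the alternating form ⟨h1,h2⟩_β = β(h1,h2)/β(h2,h1). Consequently, C^β N is isomorphic to a matrix algebra over C if and only if this form is nondegenerate. -/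
open Finset

section Aux
variable {N : Type*} [CommGroup N] [Fintype N] (β : N → N → ℂˣ)

noncomputable def tm (a b : N → ℂ) : N → ℂ :=
  fun n => ∑ h : N, (β h (h⁻¹ * n) : ℂ) * a h * b (h⁻¹ * n)

variable (hco : ∀ g h k : N, (β g h : ℂ) * β (g * h) k = (β h k : ℂ) * β g (h * k))

include hco

lemma beta_one_left (g : N) : (β 1 g : ℂ) = β 1 1 := by
  have := hco 1 1 g
  simp only [one_mul] at this
  have h0 : (β 1 g : ℂ) ≠ 0 := Units.ne_zero _
  field_simp at this
  exact this.symm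

lemma beta_one_right (g : N) : (β g 1 : ℂ) = β 1 1 := by
  have := hco g 1 1
  simp only [mul_one] at this
  have h0 : (β g 1 : ℂ) ≠ 0 := Units.ne_zero _
  field_simp at this
  exact this

/-- key multiplicativity of `h ↦ β(g₁g₂,h)/β(h,g₁g₂)` -/
lemma pair_mul (g₁ g₂ h : N) :
    (β (g₁ * g₂) h : ℂ) * β h g₁ * β h g₂ * β g₁ g₂
      = (β g₁ h : ℂ) * β g₂ h * β h (g₁ * g₂) * β g₁ g₂ := by
  have e1 := hco g₁ g₂ h
  have e2 := hco g₁ h g₂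
  have e3 := hco h g₁ g₂
  rw [mul_comm g₂ h] at e1
  rw [mul_comm g₁ h] at e2
  -- e2 : β g₁ h * β (h*g₁) g₂ = β h g₂ * β g₁ (h*g₂)
  linear_combination ((β h g₁ : ℂ) * β h g₂) * e1 - ((β g₂ h : ℂ) * β h g₁) * e2
    + ((β g₂ h : ℂ) * β g₁ h) * e3

end Aux

section Aux2
open scoped Classical
variable {N : Type*} [CommGroup N] [Fintype N] (β : N → N → ℂˣ)

/-- the pairing `⟨g,h⟩ = β g h / β h g` -/
noncomputable def w (g h : N) : ℂ := (β g h : ℂ) / (β h g : ℂ)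

lemma w_ne_zero (g h : N) : w β g h ≠ 0 :=
  div_ne_zero (Units.ne_zero _) (Units.ne_zero _)

lemma w_mul_w (g h : N) : w β g h * w β h g = 1 := by
  unfold w; field_simp

variable (hco : ∀ g h k : N, (β g h : ℂ) * β (g * h) k = (β h k : ℂ) * β g (h * k))

include hco

lemma w_mul_left (g₁ g₂ h : N) : w β (g₁ * g₂) h = w β g₁ h * w β g₂ h := by
  have key := pair_mul β hco g₁ g₂ h
  unfold w
  have h1 : (β h (g₁ * g₂) : ℂ) ≠ 0 := Units.ne_zero _
  have h2 : (β h g₁ : ℂ) ≠ 0 := Units.ne_zero _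
  have h3 : (β h g₂ : ℂ) ≠ 0 := Units.ne_zero _
  have h4 : (β g₁ g₂ : ℂ) ≠ 0 := Units.ne_zero _
  field_simp
  exact mul_right_cancel₀ h4 (by linear_combination key)

lemma w_one_left (h : N) : w β 1 h = 1 := by
  unfold w
  rw [beta_one_left β hco, beta_one_right β hco h, div_self (Units.ne_zero _)]

lemma w_inv_left (g h : N) : w β g⁻¹ h = (w β g h)⁻¹ := by
  refine eq_inv_of_mul_eq_one_left ?_
  rw [← w_mul_left β hco, inv_mul_cancel, w_one_left β hco]

/-- character sum: if `g` is not in the radical then `∑ h, ⟨h,g⟩ = 0` -/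
lemma sum_w_eq_zero {g : N} (hg : ∃ h', β g h' ≠ β h' g) : ∑ h : N, w β h g = 0 := by
  obtain ⟨h₀, hh₀⟩ := hg
  have hne : w β h₀ g ≠ 1 := by
    intro h
    unfold w at h
    rw [div_eq_one_iff_eq (Units.ne_zero _)] at h
    exact hh₀ (Units.ext h).symm
  have key : w β h₀ g * (∑ h : N, w β h g) = ∑ h : N, w β h g := by
    rw [Finset.mul_sum]
    rw [← Equiv.sum_comp (Equiv.mulLeft h₀) (fun h => w β h g)]
    apply Finset.sum_congr rfl
    intro h _
    simp only [Equiv.coe_mulLeft]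
    rw [w_mul_left β hco]
  have : (w β h₀ g - 1) * (∑ h : N, w β h g) = 0 := by linear_combination key
  rcases mul_eq_zero.mp this with h | h
  · exact absurd (sub_eq_zero.mp h) hne
  · exact h

end Aux2

section Aux3
open scoped Classical
variable {N : Type*} [CommGroup N] [Fintype N] (β : N → N → ℂˣ)

/-- delta function at `g` -/
noncomputable def dd (g : N) : N → ℂ := fun n => if n = g then 1 else 0

@[simp] lemma dd_self (g : N) : dd g g = 1 := if_pos rfl

lemma dd_ne (g n : N) (h : n ≠ g) : dd (N := N) g n = 0 := if_neg h

lemma tm_single_left (g : N) (b : N → ℂ) (n : N) :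
    tm β (dd g) b n = (β g (g⁻¹ * n) : ℂ) * b (g⁻¹ * n) := by
  unfold tm
  rw [Finset.sum_eq_single g]
  · rw [dd_self, mul_one]
  · intro h _ hh
    rw [dd_ne g h hh, mul_zero, zero_mul]
  · intro h; exact absurd (Finset.mem_univ g) h

lemma tm_single_right (a : N → ℂ) (g : N) (n : N) :
    tm β a (dd g) n = (β (n * g⁻¹) g : ℂ) * a (n * g⁻¹) := by
  unfold tm
  rw [Finset.sum_eq_single (n * g⁻¹)]
  · have e : (n * g⁻¹)⁻¹ * n = g := by group
    rw [e, dd_self, mul_one, mul_comm ((β (n * g⁻¹) g : ℂ)) (a (n * g⁻¹))]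
  · intro h _ hh
    rw [dd_ne g (h⁻¹ * n), mul_zero]
    intro hc
    exact hh (by rw [← hc]; group)
  · intro h; exact absurd (Finset.mem_univ _) h

lemma tm_single_single (g h : N) :
    tm β (dd g) (dd h) = fun n => if n = g * h then (β g h : ℂ) else 0 := by
  funext n
  rw [tm_single_left]
  unfold dd
  by_cases hc : n = g * h
  · have e : g⁻¹ * n = h := by rw [hc]; group
    rw [e, if_pos rfl, if_pos hc, mul_one]
  · have : g⁻¹ * n ≠ h := fun hx => hc (by rw [← hx]; group)
    rw [if_neg this, if_neg hc, mul_zero]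

lemma tm_assoc (hco : ∀ g h k : N, (β g h : ℂ) * β (g * h) k = (β h k : ℂ) * β g (h * k))
    (a b c : N → ℂ) : tm β (tm β a b) c = tm β a (tm β b c) := by
  funext n
  unfold tm
  simp only [Finset.sum_mul, Finset.mul_sum]
  rw [Finset.sum_comm]
  apply Finset.sum_congr rfl
  intro k _
  refine (Fintype.sum_equiv (Equiv.mulLeft k) _ _ (fun m => ?_)).symm
  simp only [Equiv.coe_mulLeft]
  have e1 : k⁻¹ * (k * m) = m := by group
  have e2 : (k * m)⁻¹ * n = m⁻¹ * (k⁻¹ * n) := by group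
  rw [e1, e2]
  have key := hco k m (m⁻¹ * (k⁻¹ * n))
  have e3 : m * (m⁻¹ * (k⁻¹ * n)) = k⁻¹ * n := by group
  rw [e3] at key
  linear_combination (-(a k * b m * c (m⁻¹ * (k⁻¹ * n)))) * key

end Aux3

section Aux4
open scoped Classical
variable {N : Type*} [CommGroup N] [Fintype N] (β : N → N → ℂˣ)

lemma tm_add_left (a b c : N → ℂ) : tm β (a + b) c = tm β a c + tm β b c := by
  funext n; unfold tm
  rw [Pi.add_apply, ← Finset.sum_add_distrib]
  apply Finset.sum_congr rfl; intro h _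
  simp only [Pi.add_apply]; ring

lemma tm_smul_left (r : ℂ) (a c : N → ℂ) : tm β (r • a) c = r • tm β a c := by
  funext n; unfold tm
  simp only [Pi.smul_apply, smul_eq_mul, Finset.mul_sum]
  apply Finset.sum_congr rfl; intro h _
  ring

lemma tm_add_right (a b c : N → ℂ) : tm β a (b + c) = tm β a b + tm β a c := by
  funext n; unfold tm
  rw [Pi.add_apply, ← Finset.sum_add_distrib]
  apply Finset.sum_congr rfl; intro h _
  simp only [Pi.add_apply]; ring

lemma tm_smul_right (r : ℂ) (a c : N → ℂ) : tm β a (r • c) = r • tm β a c := by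
  funext n; unfold tm
  simp only [Pi.smul_apply, smul_eq_mul, Finset.mul_sum]
  apply Finset.sum_congr rfl; intro h _
  ring

lemma tm_zero_right (a : N → ℂ) : tm β a 0 = 0 := by
  funext n; unfold tm
  simp

lemma tm_sum_left {ι : Type*} (s : Finset ι) (f : ι → (N → ℂ)) (b : N → ℂ) :
    tm β (∑ i ∈ s, f i) b = ∑ i ∈ s, tm β (f i) b := by
  induction s using Finset.cons_induction with
  | empty =>
    funext n; unfold tm; simp
  | cons i s hi ih =>
    rw [Finset.sum_cons, Finset.sum_cons, tm_add_left, ih]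

lemma tm_expand (a b : N → ℂ) (n : N) :
    tm β a b n = ∑ g : N, a g * tm β (dd g) b n := by
  simp only [tm_single_left β]
  unfold tm
  apply Finset.sum_congr rfl; intro g _
  ring

variable (hco : ∀ g h k : N, (β g h : ℂ) * β (g * h) k = (β h k : ℂ) * β g (h * k))
include hco

lemma tm_one_left (b : N → ℂ) : tm β (dd 1) b = (β 1 1 : ℂ) • b := by
  funext n
  rw [tm_single_left]
  have e : (1 : N)⁻¹ * n = n := by group
  rw [e, beta_one_left β hco, Pi.smul_apply, smul_eq_mul]

/-- Part 1 : characterization of the center -/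
lemma center_iff (c : N → ℂ) :
    (∀ a, tm β c a = tm β a c) ↔ ∀ h : N, (∃ h' : N, β h h' ≠ β h' h) → c h = 0 := by
  constructor
  · intro H h hex
    obtain ⟨h', hne⟩ := hex
    have := congrFun (H (dd h')) (h * h')
    rw [tm_single_right, tm_single_left] at this
    have e1 : h * h' * h'⁻¹ = h := by group
    have e2 : h'⁻¹ * (h * h') = h := by rw [mul_comm h h']; group
    rw [e1, e2] at this
    by_contra hch
    exact hne (Units.ext (mul_right_cancel₀ hch this))
  · intro hc a
    funext n
    unfold tm
    refine Fintype.sum_equiv ((Equiv.inv N).trans (Equiv.mulRight n)) _ _ (fun h => ?_)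
    simp only [Equiv.trans_apply, Equiv.inv_apply, Equiv.coe_mulRight]
    have e : (h⁻¹ * n)⁻¹ * n = h := by rw [mul_comm h⁻¹ n]; group
    rw [e]
    by_cases hch : c h = 0
    · rw [hch]; ring
    · have hsym : ∀ h', β h h' = β h' h := by
        by_contra hx
        push_neg at hx
        exact hch (hc h hx)
      have : (β h (h⁻¹ * n) : ℂ) = β (h⁻¹ * n) h := congrArg _ (hsym (h⁻¹ * n))
      rw [this]; ring

lemma beta_inv_comm (g : N) : (β g g⁻¹ : ℂ) = β g⁻¹ g := by
  have k := hco g g⁻¹ g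
  rw [mul_inv_cancel, inv_mul_cancel] at k
  rw [beta_one_left β hco, beta_one_right β hco g] at k
  exact mul_right_cancel₀ (Units.ne_zero _) k

lemma conj_coeff (h g : N) :
    (β h g : ℂ) * β (h * g) h⁻¹ = w β h g * ((β h h⁻¹ : ℂ) * β 1 1) := by
  have k := hco g h h⁻¹
  rw [mul_inv_cancel, beta_one_right β hco g, mul_comm g h] at k
  unfold w
  rw [div_mul_eq_mul_div, eq_div_iff (show ((β g h : ℂ) ≠ 0) from Units.ne_zero _)]
  linear_combination (β h g : ℂ) * k

/-- applying the weighted conjugation average -/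
lemma conj_apply (h : N) (a : N → ℂ) (g : N) :
    tm β (dd h) (tm β a (dd h⁻¹)) g = w β h g * ((β h h⁻¹ : ℂ) * β 1 1) * a g := by
  rw [← tm_assoc β hco, tm_single_right]
  simp only [inv_inv]
  rw [tm_single_left]
  have e : h⁻¹ * (g * h) = g := by rw [mul_comm g h]; group
  rw [e]
  have key := conj_coeff β hco h g
  rw [mul_comm h g] at key
  linear_combination a g * key

lemma average_eq (hnd : ∀ h : N, (∀ h' : N, β h h' = β h' h) → h = 1) (a : N → ℂ) (g : N) :
    ∑ h : N, ((β h h⁻¹ : ℂ) * β 1 1)⁻¹ * tm β (dd h) (tm β a (dd h⁻¹)) g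
      = (if g = 1 then (Fintype.card N : ℂ) * a 1 else 0) := by
  have key : ∀ h : N, ((β h h⁻¹ : ℂ) * β 1 1)⁻¹ * tm β (dd h) (tm β a (dd h⁻¹)) g
      = w β h g * a g := by
    intro h
    rw [conj_apply β hco]
    have hne : ((β h h⁻¹ : ℂ) * β 1 1) ≠ 0 :=
      mul_ne_zero (Units.ne_zero _) (Units.ne_zero _)
    field_simp
  rw [Finset.sum_congr rfl (fun h _ => key h), ← Finset.sum_mul]
  by_cases hg : g = 1
  · subst hg
    rw [if_pos rfl]
    have : ∀ h : N, w β h 1 = 1 := by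
      intro h
      unfold w
      rw [beta_one_left β hco, beta_one_right β hco h, div_self (Units.ne_zero _)]
    rw [Finset.sum_congr rfl (fun h _ => this h)]
    simp [Finset.card_univ]
  · rw [if_neg hg, sum_w_eq_zero β hco, zero_mul]
    by_contra hx
    push_neg at hx
    exact hg (hnd g hx)

end Aux4
section Aux5
open scoped Classical
open Module
variable {N : Type*} [CommGroup N] [Fintype N] (β : N → N → ℂˣ)
variable (hco : ∀ g h k : N, (β g h : ℂ) * β (g * h) k = (β h k : ℂ) * β g (h * k))
variable (hnd : ∀ h : N, (∀ h' : N, β h h' = β h' h) → h = 1)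

include hco hnd in
set_option maxHeartbeats 2000000 in
set_option synthInstance.maxHeartbeats 400000 in
lemma exists_matrix_iso :
    ∃ (k : ℕ) (Φ : (N → ℂ) → Matrix (Fin k) (Fin k) ℂ),
      Function.Bijective Φ ∧ IsLinearMap ℂ Φ ∧
      ∀ a b, Φ (tm β a b) = Φ a * Φ b := by
  -- the left-multiplication operators
  set V := (N → ℂ) with hV
  have hmul : ∀ a : N → ℂ, ∃ f : V →ₗ[ℂ] V, ∀ b, f b = tm β a b := by
    intro a
    refine ⟨⟨⟨fun b => tm β a b, fun b c => tm_add_right β a b c⟩,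
      fun r b => tm_smul_right β r a b⟩, fun b => rfl⟩
  choose mulL hmulL using hmul
  -- property of an invariant subspace
  set Pred : Submodule ℂ V → Prop :=
    fun W => W ≠ ⊥ ∧ ∀ g : N, ∀ x ∈ W, tm β (dd g) x ∈ W with hPred
  have htop : Pred ⊤ := by
    constructor
    · intro h
      have : (dd (1:N) : V) ∈ (⊤ : Submodule ℂ V) := Submodule.mem_top
      rw [h, Submodule.mem_bot] at this
      have := congrFun this 1
      simp [dd] at this
    · intro g x _
      exact Submodule.mem_top
  -- choose an invariant subspace of minimal positive dimension
  have hne : ((fun W : Submodule ℂ V => finrank ℂ (↥W)) '' {W | Pred W}).Nonempty :=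
    ⟨_, ⊤, htop, rfl⟩
  obtain ⟨S, hSpred, hSrank⟩ := Nat.sInf_mem hne
  have hmin : ∀ W : Submodule ℂ V, Pred W → W ≤ S → W = S := by
    intro W hW hle
    refine Submodule.eq_of_le_of_finrank_le hle ?_
    exact (le_of_eq hSrank).trans (Nat.sInf_le ⟨W, hW, rfl⟩)
  obtain ⟨hSne, hSinv⟩ := hSpred
  -- invariance under all left multiplications
  have hSinv' : ∀ a : N → ℂ, ∀ x ∈ S, tm β a x ∈ S := by
    intro a x hx
    have : tm β a x = ∑ g : N, a g • tm β (dd g) x := by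
      funext n
      rw [tm_expand β a x n]
      simp only [Finset.sum_apply, Pi.smul_apply, smul_eq_mul]
    rw [this]
    exact Submodule.sum_mem S fun g _ => Submodule.smul_mem S _ (hSinv g x hx)
  -- the representation
  set ρ : (N → ℂ) → (S →ₗ[ℂ] S) := fun a =>
    LinearMap.restrict (mulL a) (p := S) (q := S)
      (fun x hx => by rw [hmulL]; exact hSinv' a x hx) with hρ
  have ρ_apply : ∀ a (x : S), ((ρ a x : V)) = tm β a (x : V) := by
    intro a x
    rw [hρ]
    simp only [LinearMap.restrict_apply, hmulL]
  have ρ_comp : ∀ a b, ρ (tm β a b) = ρ a ∘ₗ ρ b := by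
    intro a b
    apply LinearMap.ext; intro x
    apply Subtype.ext
    rw [LinearMap.comp_apply, ρ_apply, ρ_apply, ρ_apply, tm_assoc β hco]
  have ρ_add : ∀ a b, ρ (a + b) = ρ a + ρ b := by
    intro a b
    apply LinearMap.ext; intro x
    apply Subtype.ext
    rw [LinearMap.add_apply, Submodule.coe_add, ρ_apply, ρ_apply, ρ_apply, tm_add_left]
  have ρ_smul : ∀ (r : ℂ) a, ρ (r • a) = r • ρ a := by
    intro r a
    apply LinearMap.ext; intro x
    apply Subtype.ext
    rw [LinearMap.smul_apply, Submodule.coe_smul, ρ_apply, ρ_apply, tm_smul_left]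
  -- the operators T_g
  set R : N → (↥S →ₗ[ℂ] ↥S) := fun g => ρ (dd g) with hR
  have dd_mul : ∀ g h : N, tm β (dd g) (dd h) = (β g h : ℂ) • dd (g * h) := by
    intro g h
    rw [tm_single_single]
    funext n
    simp only [Pi.smul_apply, smul_eq_mul, dd]
    by_cases hc : n = g * h
    · rw [if_pos hc, if_pos hc, mul_one]
    · rw [if_neg hc, if_neg hc, mul_zero]
  have R_comp : ∀ g h : N, R g ∘ₗ R h = (β g h : ℂ) • R (g * h) := by
    intro g h
    rw [hR, ← ρ_comp, dd_mul, ρ_smul]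
  have R_one : R 1 = (β 1 1 : ℂ) • LinearMap.id := by
    apply LinearMap.ext; intro x; apply Subtype.ext
    rw [hR]
    rw [ρ_apply, tm_one_left β hco]
    simp
  -- inverses
  set u : N → ℂ := fun g => (β g g⁻¹ : ℂ) * β 1 1 with hu
  have hu0 : ∀ g, u g ≠ 0 := fun g => mul_ne_zero (Units.ne_zero _) (Units.ne_zero _)
  set R' : N → (↥S →ₗ[ℂ] ↥S) := fun g => (u g)⁻¹ • R g⁻¹ with hR'
  have rdef : ∀ g, R' g = (u g)⁻¹ • R g⁻¹ := fun g => rfl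
  have udef : ∀ g, u g = (β g g⁻¹ : ℂ) * (β 1 1 : ℂ) := fun g => rfl
  have hRR' : ∀ g, R g ∘ₗ R' g = LinearMap.id := by
    intro g
    have hone : (u g)⁻¹ * ((β g g⁻¹ : ℂ) * (β 1 1 : ℂ)) = 1 := by
      rw [hu]; field_simp
    rw [rdef, LinearMap.comp_smul, R_comp, mul_inv_cancel, R_one, smul_smul, smul_smul,
      mul_assoc, hone, one_smul]
  have hR'R : ∀ g, R' g ∘ₗ R g = LinearMap.id := by
    intro g
    have hone : (u g)⁻¹ * ((β g⁻¹ g : ℂ) * (β 1 1 : ℂ)) = 1 := by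
      rw [hu, ← beta_inv_comm β hco g]; field_simp
    rw [rdef, LinearMap.smul_comp, R_comp, inv_mul_cancel, R_one, smul_smul, smul_smul,
      mul_assoc, hone, one_smul]
  have hRR'p : ∀ g x, R g (R' g x) = x := by
    intro g x
    have := LinearMap.congr_fun (hRR' g) x
    simpa using this
  have hR'Rp : ∀ g x, R' g (R g x) = x := by
    intro g x
    have := LinearMap.congr_fun (hR'R g) x
    simpa using this
  have inv_unique : ∀ A B C : ↥S →ₗ[ℂ] ↥S, A ∘ₗ B = LinearMap.id → C ∘ₗ A = LinearMap.id →
      B = C := by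
    intro A B C hAB hCA
    rw [← LinearMap.id_comp B, ← hCA, LinearMap.comp_assoc, hAB, LinearMap.comp_id]
  have hR'comp : ∀ g h : N, R' g ∘ₗ R' h = ((β h g : ℂ))⁻¹ • R' (h * g) := by
    intro g h
    refine inv_unique (R h ∘ₗ R g) _ _ ?_ ?_
    · apply LinearMap.ext; intro x
      simp only [LinearMap.comp_apply, LinearMap.id_apply]
      rw [hRR'p g, hRR'p h]
    · rw [R_comp, LinearMap.smul_comp, LinearMap.comp_smul, smul_smul,
        inv_mul_cancel₀ (Units.ne_zero _), one_smul, hR'R]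
  -- injectivity of ρ
  have ρ_inj : ∀ a : N → ℂ, ρ a = 0 → a = 0 := by
    intro a ha
    by_contra hne0
    obtain ⟨g₀, hg₀⟩ := Function.ne_iff.mp hne0
    have hz : ∀ x ∈ S, tm β a x = 0 := by
      intro x hx
      have h1 := LinearMap.congr_fun ha ⟨x, hx⟩
      have h2 := congrArg (Subtype.val) h1
      rw [ρ_apply] at h2
      exact h2
    set a' := tm β a (dd g₀⁻¹) with ha'
    have hz' : ∀ x ∈ S, tm β a' x = 0 := by
      intro x hx
      rw [ha', tm_assoc β hco]
      exact hz _ (hSinv g₀⁻¹ x hx)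
    have ha'1 : a' 1 ≠ 0 := by
      rw [ha', tm_single_right]
      have e : (1 : N) * g₀⁻¹⁻¹ = g₀ := by group
      rw [e]
      exact mul_ne_zero (Units.ne_zero _) hg₀
    set E : N → ℂ := ∑ h : N, ((β h h⁻¹ : ℂ) * β 1 1)⁻¹ • tm β (dd h) (tm β a' (dd h⁻¹))
      with hE
    have hzE : ∀ x ∈ S, tm β E x = 0 := by
      intro x hx
      rw [hE, tm_sum_left β]
      apply Finset.sum_eq_zero
      intro h _
      rw [tm_smul_left, tm_assoc β hco, tm_assoc β hco, hz' _ (hSinv h⁻¹ x hx),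
        tm_zero_right, smul_zero]
    have hEval : E = ((Fintype.card N : ℂ) * a' 1) • dd 1 := by
      funext g
      rw [hE]
      have lhs : (∑ h : N, ((β h h⁻¹ : ℂ) * β 1 1)⁻¹ • tm β (dd h) (tm β a' (dd h⁻¹))) g
          = ∑ h : N, ((β h h⁻¹ : ℂ) * β 1 1)⁻¹ * tm β (dd h) (tm β a' (dd h⁻¹)) g := by
        rw [Finset.sum_apply]
        apply Finset.sum_congr rfl
        intro h _
        rw [Pi.smul_apply, smul_eq_mul]
      rw [lhs, average_eq β hco hnd a' g]
      simp only [Pi.smul_apply, smul_eq_mul, dd]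
      by_cases hg : g = 1
      · rw [if_pos hg, if_pos hg, mul_one]
      · rw [if_neg hg, if_neg hg, mul_zero]
    obtain ⟨x₀, hx₀S, hx₀⟩ := (Submodule.ne_bot_iff S).mp hSne
    have hcontr := hzE x₀ hx₀S
    rw [hEval, tm_smul_left, tm_one_left β hco, smul_smul] at hcontr
    have hcoef : ((Fintype.card N : ℂ) * a' 1) * (β 1 1 : ℂ) ≠ 0 := by
      apply mul_ne_zero (mul_ne_zero _ ha'1) (Units.ne_zero _)
      exact_mod_cast Nat.cast_ne_zero.mpr Fintype.card_ne_zero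
    rcases smul_eq_zero.mp hcontr with h | h
    · exact hcoef h
    · exact hx₀ h
  -- Schur's lemma
  haveI hSnontriv : Nontrivial ↥S := Submodule.nontrivial_iff_ne_bot.mpr hSne
  have schur : ∀ G : ↥S →ₗ[ℂ] ↥S, (∀ g, R g ∘ₗ G = G ∘ₗ R g) →
      ∃ lam : ℂ, G = lam • LinearMap.id := by
    intro G hG
    obtain ⟨c, hc⟩ := Module.End.exists_eigenvalue (G : Module.End ℂ ↥S)
    refine ⟨c, ?_⟩
    set W' := Module.End.eigenspace (G : Module.End ℂ ↥S) c with hW'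
    have hW'ne : W' ≠ ⊥ := hc
    set W := W'.map S.subtype with hW
    have hWpred : Pred W := by
      constructor
      · intro hbot
        apply hW'ne
        rw [eq_bot_iff]
        intro y hy
        have hyW : (y : V) ∈ W := Submodule.mem_map_of_mem hy
        rw [hbot, Submodule.mem_bot] at hyW
        have : y = 0 := Subtype.ext hyW
        rw [this]
        exact Submodule.zero_mem ⊥
      · intro g x hx
        obtain ⟨y, hy, rfl⟩ := Submodule.mem_map.mp hx
        have key : tm β (dd g) (S.subtype y) = S.subtype (R g y) := by
          rw [hR]
          exact (ρ_apply (dd g) y).symm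
        rw [key]
        apply Submodule.mem_map_of_mem
        rw [hW', Module.End.mem_eigenspace_iff] at hy ⊢
        have e1 := LinearMap.congr_fun (hG g) y
        simp only [LinearMap.comp_apply] at e1
        calc G (R g y) = R g (G y) := e1.symm
          _ = R g (c • y) := by rw [hy]
          _ = c • R g y := map_smul _ _ _
    have hWS := hmin W hWpred (Submodule.map_subtype_le S W')
    apply LinearMap.ext
    intro y
    have hyW' : y ∈ W' := by
      have hyW : (y : V) ∈ W := by rw [hWS]; exact y.2
      obtain ⟨z, hz, hzy⟩ := Submodule.mem_map.mp hyW
      have : z = y := Subtype.ext hzy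
      rwa [← this]
    have := Module.End.mem_eigenspace_iff.mp hyW'
    simpa using this
  -- commutation relation
  have w_inv' : ∀ g k : N, (w β g k)⁻¹ = w β k g := by
    intro g k
    exact (eq_inv_of_mul_eq_one_left (w_mul_w β k g)).symm
  have hAdAd : ∀ (F' : ↥S →ₗ[ℂ] ↥S) (h g : N),
      R h ∘ₗ (R g ∘ₗ F' ∘ₗ R' g) ∘ₗ R' h = R (h * g) ∘ₗ F' ∘ₗ R' (h * g) := by
    intro F' h g
    apply LinearMap.ext; intro x
    simp only [LinearMap.comp_apply]
    have e1 : R' g (R' h x) = ((β h g : ℂ))⁻¹ • R' (h * g) x := by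
      have := LinearMap.congr_fun (hR'comp g h) x
      simpa using this
    have e2 : ∀ y, R h (R g y) = (β h g : ℂ) • R (h * g) y := by
      intro y
      have := LinearMap.congr_fun (R_comp h g) y
      simpa using this
    rw [e1]
    simp only [map_smul]
    rw [e2, smul_smul, inv_mul_cancel₀ (Units.ne_zero _), one_smul]
  -- surjectivity of ρ
  have ρ_expand : ∀ a : N → ℂ, ρ a = ∑ g : N, a g • R g := by
    intro a
    apply LinearMap.ext; intro x
    apply Subtype.ext
    rw [ρ_apply]
    have lhs : tm β a (↑x) = ∑ g : N, a g • tm β (dd g) (↑x : V) := by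
      funext n
      rw [tm_expand β a _ n, Finset.sum_apply]
      apply Finset.sum_congr rfl
      intro g _
      rw [Pi.smul_apply, smul_eq_mul]
    rw [lhs]
    rw [LinearMap.sum_apply, Submodule.coe_sum]
    apply Finset.sum_congr rfl
    intro g _
    rw [LinearMap.smul_apply, Submodule.coe_smul, hR, ρ_apply]
  have ρ_surj : ∀ F : ↥S →ₗ[ℂ] ↥S, ∃ a, ρ a = F := by
    intro F
    set Fk : N → (↥S →ₗ[ℂ] ↥S) := fun k =>
      (Fintype.card N : ℂ)⁻¹ • ∑ g : N, (w β g k)⁻¹ • (R g ∘ₗ F ∘ₗ R' g) with hFk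
    have Fkdef : ∀ k, Fk k
        = (Fintype.card N : ℂ)⁻¹ • ∑ g : N, (w β g k)⁻¹ • (R g ∘ₗ F ∘ₗ R' g) := fun k => rfl
    have hcard : (Fintype.card N : ℂ) ≠ 0 :=
      Nat.cast_ne_zero.mpr Fintype.card_ne_zero
    -- ∑ k, Fk k = F
    have hsum : ∑ k : N, Fk k = F := by
      rw [Finset.sum_congr rfl (fun k _ => Fkdef k), ← Finset.smul_sum]
      rw [Finset.sum_comm]
      have inner : ∀ g : N, ∑ k : N, (w β g k)⁻¹ • (R g ∘ₗ F ∘ₗ R' g)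
          = (∑ k : N, w β k g) • (R g ∘ₗ F ∘ₗ R' g) := by
        intro g
        rw [Finset.sum_smul]
        exact Finset.sum_congr rfl fun k _ => by rw [w_inv' g k]
      rw [Finset.sum_congr rfl (fun g _ => inner g)]
      rw [Finset.sum_eq_single 1]
      · have hW1 : ∑ k : N, w β k 1 = (Fintype.card N : ℂ) := by
          have : ∀ k : N, w β k 1 = 1 := by
            intro k
            unfold w
            rw [beta_one_left β hco, beta_one_right β hco k, div_self (Units.ne_zero _)]
          rw [Finset.sum_congr rfl (fun k _ => this k)]
          simp [Finset.card_univ]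
        rw [hW1, smul_smul, inv_mul_cancel₀ hcard, one_smul]
        -- R 1 ∘ₗ F ∘ₗ R' 1 = F
        apply LinearMap.ext; intro x
        simp only [LinearMap.comp_apply]
        have hR'1 : R' 1 x = ((β 1 1 : ℂ))⁻¹ • x := by
          rw [rdef 1, inv_one, LinearMap.smul_apply, R_one]
          simp only [LinearMap.smul_apply, LinearMap.id_apply, smul_smul]
          congr 1
          rw [udef 1, inv_one]
          field_simp
        rw [hR'1, map_smul, map_smul, R_one]
        simp only [LinearMap.smul_apply, LinearMap.id_apply, smul_smul]
        rw [inv_mul_cancel₀ (Units.ne_zero _), one_smul]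
      · intro g _ hg
        have : ∑ k : N, w β k g = 0 := by
          apply sum_w_eq_zero β hco
          by_contra hx
          push_neg at hx
          exact hg (hnd g hx)
        rw [this, zero_smul]
      · intro h; exact absurd (Finset.mem_univ _) h
    have Fkapp : ∀ (k : N) (y : ↥S), Fk k y
        = (Fintype.card N : ℂ)⁻¹ • ∑ g : N, (w β g k)⁻¹ • R g (F (R' g y)) := by
      intro k y
      rw [Fkdef k]
      simp only [LinearMap.smul_apply, LinearMap.sum_apply, LinearMap.comp_apply]
    -- each Fk is an eigenvector for conjugation
    have hAd : ∀ k h : N, ∀ x : ↥S, R h (Fk k (R' h x)) = w β h k • Fk k x := by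
      intro k h x
      rw [Fkapp, Fkapp]
      rw [map_smul, map_sum]
      simp only [map_smul]
      have step : ∀ g : N, R h (R g (F (R' g (R' h x)))) = R (h * g) (F (R' (h * g) x)) := by
        intro g
        have := LinearMap.congr_fun (hAdAd F h g) x
        simp only [LinearMap.comp_apply] at this
        exact this
      rw [Finset.sum_congr rfl
        (fun g _ => congrArg (fun z => (w β g k)⁻¹ • z) (step g))]
      have reindex : ∑ g : N, (w β g k)⁻¹ • R (h * g) (F (R' (h * g) x))
          = ∑ g : N, (w β (h⁻¹ * g) k)⁻¹ • R g (F (R' g x)) := by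
        refine Fintype.sum_equiv (Equiv.mulLeft h) _ _ (fun g => ?_)
        simp only [Equiv.coe_mulLeft]
        have e : h⁻¹ * (h * g) = g := by group
        rw [e]
      rw [reindex]
      have wfact : ∀ g : N, (w β (h⁻¹ * g) k)⁻¹ = w β h k * (w β g k)⁻¹ := by
        intro g
        rw [w_mul_left β hco, w_inv_left β hco, mul_inv, inv_inv]
      rw [Finset.sum_congr rfl (fun g _ => by rw [wfact g, ← smul_smul])]
      rw [← Finset.smul_sum, smul_comm]
    -- Fk k is a multiple of R k
    have hFkR : ∀ k : N, ∃ lam : ℂ, Fk k = lam • R k := by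
      intro k
      have hcom : ∀ h, R h ∘ₗ (Fk k ∘ₗ R' k) = (Fk k ∘ₗ R' k) ∘ₗ R h := by
        intro h
        have e1 : ∀ y, R h (Fk k y) = w β h k • Fk k (R h y) := by
          intro y
          have := hAd k h (R h y)
          rwa [hR'Rp h] at this
        have c1 : ∀ y, R h (R k y) = w β h k • R k (R h y) := by
          intro y
          have d1 : R h (R k y) = (β h k : ℂ) • R (h * k) y := by
            simpa using LinearMap.congr_fun (R_comp h k) y
          have d2 : R k (R h y) = (β k h : ℂ) • R (k * h) y := by
            simpa using LinearMap.congr_fun (R_comp k h) y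
          rw [d1, d2, smul_smul, mul_comm h k]
          congr 1
          unfold w
          rw [div_mul_cancel₀ _ (Units.ne_zero (β k h))]
        have e2 : ∀ x, R h (R' k x) = (w β h k)⁻¹ • R' k (R h x) := by
          intro x
          have c2 : R h x = w β h k • R k (R h (R' k x)) := by
            have := c1 (R' k x)
            rwa [hRR'p k] at this
          have c3 : R' k (R h x) = w β h k • R h (R' k x) := by
            have := congrArg (R' k) c2
            rw [map_smul, hR'Rp k] at this
            exact this
          rw [c3, smul_smul, inv_mul_cancel₀ (w_ne_zero β h k), one_smul]
        apply LinearMap.ext; intro x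
        simp only [LinearMap.comp_apply]
        rw [e1, e2, map_smul, smul_smul, mul_inv_cancel₀ (w_ne_zero β h k), one_smul]
      obtain ⟨lam, hlam⟩ := schur (Fk k ∘ₗ R' k) hcom
      refine ⟨lam, ?_⟩
      apply LinearMap.ext; intro x
      have := LinearMap.congr_fun hlam (R k x)
      simp only [LinearMap.comp_apply, LinearMap.smul_apply, LinearMap.id_apply] at this
      rw [hR'Rp k] at this
      simp only [LinearMap.smul_apply]
      exact this
    choose lam hlam using hFkR
    refine ⟨fun k => lam k, ?_⟩
    rw [ρ_expand]
    rw [← hsum]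
    exact Finset.sum_congr rfl fun k _ => (hlam k).symm
  -- assemble the matrix isomorphism
  haveI : FiniteDimensional ℂ ↥S := inferInstance
  set bS := Module.finBasis ℂ ↥S with hbS
  refine ⟨finrank ℂ ↥S, fun a => LinearMap.toMatrix bS bS (ρ a), ⟨?_, ?_⟩, ⟨?_, ?_⟩, ?_⟩
  · intro a b hab
    have h1 : ρ a = ρ b := (LinearMap.toMatrix bS bS).injective hab
    have e : a - b = a + (-1 : ℂ) • b := by
      funext n
      simp only [Pi.sub_apply, Pi.add_apply, Pi.smul_apply, smul_eq_mul]
      ring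
    have h2 : ρ (a - b) = 0 := by
      rw [e, ρ_add, ρ_smul, h1, neg_one_smul ℂ (ρ b)]
      exact add_neg_cancel _
    exact sub_eq_zero.mp (ρ_inj _ h2)
  · intro M
    obtain ⟨a, ha⟩ := ρ_surj ((LinearMap.toMatrix bS bS).symm M)
    refine ⟨a, ?_⟩
    show LinearMap.toMatrix bS bS (ρ a) = M
    rw [ha]
    simp
  · intro a b
    show LinearMap.toMatrix bS bS (ρ (a + b))
        = LinearMap.toMatrix bS bS (ρ a) + LinearMap.toMatrix bS bS (ρ b)
    rw [ρ_add, LinearEquiv.map_add]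
  · intro c a
    show LinearMap.toMatrix bS bS (ρ (c • a)) = c • LinearMap.toMatrix bS bS (ρ a)
    rw [ρ_smul, LinearEquiv.map_smul]
  · intro a b
    show LinearMap.toMatrix bS bS (ρ (tm β a b))
        = LinearMap.toMatrix bS bS (ρ a) * LinearMap.toMatrix bS bS (ρ b)
    rw [ρ_comp, LinearMap.toMatrix_comp bS bS bS]

end Aux5

section Aux6
open scoped Classical
open Module
variable {N : Type*} [CommGroup N] [Fintype N] (β : N → N → ℂˣ)
variable (hco : ∀ g h k : N, (β g h : ℂ) * β (g * h) k = (β h k : ℂ) * β g (h * k))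

include hco in
lemma radical_trivial_of_iso
    (hiso : ∃ (k : ℕ) (Φ : (N → ℂ) → Matrix (Fin k) (Fin k) ℂ),
      Function.Bijective Φ ∧ IsLinearMap ℂ Φ ∧
      ∀ a b, Φ (tm β a b) = Φ a * Φ b) :
    ∀ h : N, (∀ h' : N, β h h' = β h' h) → h = 1 := by
  obtain ⟨k, Φ, ⟨Φinj, Φsurj⟩, Φlin, Φmul⟩ := hiso
  intro h hrad
  by_contra hne
  -- k ≠ 0
  have hk : k ≠ 0 := by
    intro hk0
    subst hk0
    have h0 : Φ (dd 1) = Φ 0 := Subsingleton.elim _ _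
    have := congrFun (Φinj h0) 1
    simp [dd] at this
  -- dd h is central
  have hcent : ∀ a, tm β (dd h) a = tm β a (dd h) := by
    refine (center_iff β hco (dd h)).mpr (fun g hg => ?_)
    by_cases hgh : g = h
    · subst hgh
      obtain ⟨h', hh'⟩ := hg
      exact absurd (hrad h') hh'
    · exact dd_ne h g hgh
  -- Φ (dd h) commutes with every matrix
  have hcomm : ∀ P : Matrix (Fin k) (Fin k) ℂ, Commute P (Φ (dd h)) := by
    intro P
    obtain ⟨a, rfl⟩ := Φsurj P
    show Φ a * Φ (dd h) = Φ (dd h) * Φ a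
    rw [← Φmul, ← Φmul, hcent]
  obtain ⟨r, hr⟩ :=
    Matrix.mem_range_scalar_of_commute_single (M := Φ (dd h))
      (fun i j _ => hcomm _)
  -- Φ (dd 1) = β 1 1 • 1
  obtain ⟨a1, ha1⟩ := Φsurj 1
  have hΦ1 : Φ (dd 1) = (β 1 1 : ℂ) • (1 : Matrix (Fin k) (Fin k) ℂ) := by
    have e1 : Φ (dd 1) * Φ a1 = Φ (tm β (dd 1) a1) := (Φmul _ _).symm
    rw [tm_one_left β hco, Φlin.map_smul, ha1, mul_one] at e1
    exact e1
  -- scalar r • 1 equals Φ (dd h)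
  have hscalar : Φ (dd h) = r • (1 : Matrix (Fin k) (Fin k) ℂ) := by
    rw [← hr]
    ext i j
    simp only [Matrix.scalar_apply, Matrix.diagonal_apply, Matrix.smul_apply,
      Matrix.one_apply, smul_eq_mul]
    by_cases hij : i = j
    · rw [if_pos hij, if_pos hij, mul_one]
    · rw [if_neg hij, if_neg hij, mul_zero]
  have hΦeq : Φ ((r * ((β 1 1 : ℂ))⁻¹) • dd 1) = Φ (dd h) := by
    rw [Φlin.map_smul, hΦ1, hscalar, smul_smul, mul_assoc,
      inv_mul_cancel₀ (Units.ne_zero _), mul_one]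
  have := congrFun (Φinj hΦeq) h
  simp only [Pi.smul_apply, smul_eq_mul] at this
  rw [dd_ne 1 h hne, dd_self, mul_zero] at this
  exact one_ne_zero this.symm

end Aux6

/-- For a finite abelian group `N` with a 2-cocycle `β : N × N → ℂˣ`, the center of
the twisted group algebra `ℂ^β N` is spanned by the `T_h` with `h` in the radical of
the form `⟨h₁,h₂⟩_β = β(h₁,h₂)/β(h₂,h₁)`; consequently `ℂ^β N` is isomorphic to a
matrix algebra over `ℂ` if and only if this form is nondegenerate. -/
theorem stmt18 (N : Type*) [CommGroup N] [Fintype N]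
    (β : N → N → ℂˣ)
    (hcocycle : ∀ g h k : N,
      (β g h : ℂ) * β (g * h) k = (β h k : ℂ) * β g (h * k)) :
    let tmul : (N → ℂ) → (N → ℂ) → (N → ℂ) :=
      fun a b n => ∑ h : N, (β h (h⁻¹ * n) : ℂ) * a h * b (h⁻¹ * n)
    -- the center is spanned by `T_h` for `h` in the radical of the form
    ((∀ c : N → ℂ, (∀ a, tmul c a = tmul a c) ↔
        (∀ h : N, (∃ h' : N, β h h' ≠ β h' h) → c h = 0)) ∧
      -- `ℂ^β N` is a matrix algebra iff the form is nondegenerate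
      ((∃ (k : ℕ) (Φ : (N → ℂ) → Matrix (Fin k) (Fin k) ℂ),
          Function.Bijective Φ ∧ IsLinearMap ℂ Φ ∧
          ∀ a b, Φ (tmul a b) = Φ a * Φ b) ↔
        (∀ h : N, (∀ h' : N, β h h' = β h' h) → h = 1))) := by
  intro tmul
  have htm : tmul = tm β := rfl
  rw [htm]
  refine ⟨fun c => center_iff β hcocycle c, ?_, ?_⟩
  · exact fun hiso => radical_trivial_of_iso β hcocycle hiso
  · exact fun hnd => exists_matrix_iso β hcocycle hnd
end
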